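/- arXiv:1909.11533 — 7 statements merged into one kernel-verified Lean document; each statement's English description precedes it below -/
import Mathlib

section
/- The soliton has zero NLS energy on the real line: (1/2)·∫_ℝ φ'(x)² dx = (1/6)·∫_ℝ φ(x)⁶ dx. -/
open Real MeasureTheory Set Filter

/-- The soliton `φ(x) = cosh(2x/√3)^(-1/2)`. -/
noncomputable def soliton (x : ℝ) : ℝ := (Real.cosh (2 * x / Real.sqrt 3)) ^ (-(1/2) : ℝ)

open Topology

private lemma s3_pos : (0:ℝ) < Real.sqrt 3 := Real.sqrt_pos.2 (by norm_num)

private lemma s3_sq : Real.sqrt 3 ^ 2 = 3 := Real.sq_sqrt (by norm_num)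

private lemma s3_le_two : Real.sqrt 3 ≤ 2 := by nlinarith [s3_sq, s3_pos]

private lemma hu_deriv (x : ℝ) :
    HasDerivAt (fun y : ℝ => 2 * y / Real.sqrt 3) (2 / Real.sqrt 3) x := by
  simpa using ((hasDerivAt_id x).const_mul 2).div_const (Real.sqrt 3)

private lemma soliton_hasDerivAt (x : ℝ) :
    HasDerivAt soliton
      (-(1/2) * Real.cosh (2 * x / Real.sqrt 3) ^ ((-(1/2):ℝ) - 1) *
        (Real.sinh (2 * x / Real.sqrt 3) * (2 / Real.sqrt 3))) x := by
  have h1 : HasDerivAt (fun y : ℝ => Real.cosh (2 * y / Real.sqrt 3))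
      (Real.sinh (2 * x / Real.sqrt 3) * (2 / Real.sqrt 3)) x :=
    (Real.hasDerivAt_cosh _).comp x (hu_deriv x)
  have h2 : HasDerivAt (fun y : ℝ => y ^ (-(1/2):ℝ))
      (-(1/2) * Real.cosh (2 * x / Real.sqrt 3) ^ ((-(1/2):ℝ) - 1))
      (Real.cosh (2 * x / Real.sqrt 3)) :=
    Real.hasDerivAt_rpow_const (Or.inl (Real.cosh_pos _).ne')
  exact h2.comp x h1

private lemma rpow_sq_eq (c : ℝ) (hc : 0 < c) :
    (c ^ ((-(1/2):ℝ) - 1)) ^ 2 = (c⁻¹) ^ 3 := by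
  rw [← Real.rpow_natCast (c ^ ((-(1/2):ℝ) - 1)) 2, ← Real.rpow_mul hc.le]
  have : ((-(1/2):ℝ) - 1) * (2:ℕ) = -(3:ℕ) := by push_cast; ring
  rw [this, Real.rpow_neg hc.le, Real.rpow_natCast, inv_pow]

private lemma rpow_six_eq (c : ℝ) (hc : 0 < c) :
    (c ^ (-(1/2):ℝ)) ^ 6 = (c⁻¹) ^ 3 := by
  rw [← Real.rpow_natCast (c ^ (-(1/2):ℝ)) 6, ← Real.rpow_mul hc.le]
  have : (-(1/2):ℝ) * (6:ℕ) = -(3:ℕ) := by push_cast; ring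
  rw [this, Real.rpow_neg hc.le, Real.rpow_natCast, inv_pow]

private lemma deriv_soliton_sq (x : ℝ) :
    (deriv soliton x) ^ 2 =
      (1/3) * ((Real.cosh (2 * x / Real.sqrt 3))⁻¹
        - ((Real.cosh (2 * x / Real.sqrt 3))⁻¹) ^ 3) := by
  rw [(soliton_hasDerivAt x).deriv]
  set c := Real.cosh (2 * x / Real.sqrt 3) with hc
  set s := Real.sinh (2 * x / Real.sqrt 3) with hs
  have hcpos : 0 < c := Real.cosh_pos _
  have hs2 : s ^ 2 = c ^ 2 - 1 := Real.sinh_sq _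
  have e1 : (c ^ ((-(1/2):ℝ) - 1)) ^ 2 = (c⁻¹) ^ 3 := rpow_sq_eq c hcpos
  generalize c ^ ((-(1/2):ℝ) - 1) = a at e1 ⊢
  have expand : (-(1/2) * a * (s * (2 / Real.sqrt 3))) ^ 2
      = a ^ 2 * s ^ 2 / Real.sqrt 3 ^ 2 := by
    field_simp [s3_pos.ne']
  rw [expand, e1, s3_sq, hs2]
  field_simp

private lemma soliton_pow_six (x : ℝ) :
    (soliton x) ^ 6 = ((Real.cosh (2 * x / Real.sqrt 3))⁻¹) ^ 3 :=
  rpow_six_eq _ (Real.cosh_pos _)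

/-- The key exponential lower bound on `cosh (2x/√3)`. -/
private lemma exp_abs_le_cosh (x : ℝ) :
    Real.exp |x| ≤ 2 * Real.cosh (2 * x / Real.sqrt 3) := by
  have habs : |2 * x / Real.sqrt 3| = 2 * |x| / Real.sqrt 3 := by
    rw [abs_div, abs_mul, abs_two, abs_of_nonneg (Real.sqrt_nonneg 3)]
  have h1 : |x| ≤ 2 * |x| / Real.sqrt 3 := by
    rw [le_div_iff₀ s3_pos]
    nlinarith [abs_nonneg x, s3_le_two]
  calc Real.exp |x| ≤ Real.exp (2 * |x| / Real.sqrt 3) := Real.exp_le_exp.2 h1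
    _ = Real.exp |2 * x / Real.sqrt 3| := by rw [habs]
    _ ≤ 2 * Real.cosh |2 * x / Real.sqrt 3| := by
        rw [Real.cosh_eq]; nlinarith [Real.exp_pos (-|2 * x / Real.sqrt 3|)]
    _ = 2 * Real.cosh (2 * x / Real.sqrt 3) := by rw [Real.cosh_abs]

private lemma inv_cosh_le (x : ℝ) :
    (Real.cosh (2 * x / Real.sqrt 3))⁻¹ ≤ 2 * Real.exp (-|x|) := by
  have hc : 0 < Real.cosh (2 * x / Real.sqrt 3) := Real.cosh_pos _
  rw [Real.exp_neg]
  have h : Real.exp |x| / 2 ≤ Real.cosh (2 * x / Real.sqrt 3) := by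
    linarith [exp_abs_le_cosh x]
  calc (Real.cosh (2 * x / Real.sqrt 3))⁻¹
      ≤ (Real.exp |x| / 2)⁻¹ := inv_anti₀ (by positivity) h
    _ = 2 * (Real.exp |x|)⁻¹ := by rw [inv_div, div_eq_mul_inv]

private lemma cont_inv_cosh :
    Continuous fun x : ℝ => (Real.cosh (2 * x / Real.sqrt 3))⁻¹ := by
  apply Continuous.inv₀
  · exact Real.continuous_cosh.comp (by continuity)
  · exact fun x => (Real.cosh_pos _).ne'

private lemma integrable_inv_cosh :
    Integrable fun x : ℝ => (Real.cosh (2 * x / Real.sqrt 3))⁻¹ := by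
  rw [← integrableOn_univ, ← Set.Iic_union_Ioi (a := (0:ℝ))]
  apply IntegrableOn.union
  · apply Integrable.mono' ((integrableOn_exp_Iic 0).const_mul 2)
      cont_inv_cosh.aestronglyMeasurable.restrict
    filter_upwards [ae_restrict_mem measurableSet_Iic] with x hx
    have hx' : x ≤ 0 := hx
    have := inv_cosh_le x
    rw [abs_of_nonpos hx', neg_neg] at this
    rw [Real.norm_eq_abs, abs_of_nonneg (by positivity)]
    exact this
  · apply Integrable.mono' ((exp_neg_integrableOn_Ioi 0 (by norm_num : (0:ℝ) < 1)).const_mul 2)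
      cont_inv_cosh.aestronglyMeasurable.restrict
    filter_upwards [ae_restrict_mem measurableSet_Ioi] with x hx
    have hx' : (0:ℝ) ≤ x := le_of_lt hx
    have := inv_cosh_le x
    rw [abs_of_nonneg hx'] at this
    rw [Real.norm_eq_abs, abs_of_nonneg (by positivity)]
    simpa using this

private lemma integrable_inv_cosh_cube :
    Integrable fun x : ℝ => ((Real.cosh (2 * x / Real.sqrt 3))⁻¹) ^ 3 := by
  apply Integrable.mono' integrable_inv_cosh
    ((cont_inv_cosh.pow 3).aestronglyMeasurable)
  filter_upwards with x
  have hc : 0 < Real.cosh (2 * x / Real.sqrt 3) := Real.cosh_pos _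
  have h1 : (Real.cosh (2 * x / Real.sqrt 3))⁻¹ ≤ 1 := by
    exact inv_le_one_of_one_le₀ (Real.one_le_cosh _)
  show ‖((Real.cosh (2 * x / Real.sqrt 3))⁻¹) ^ 3‖ ≤ _
  rw [Real.norm_eq_abs, abs_of_nonneg (pow_nonneg (inv_nonneg.2 hc.le) 3)]
  calc ((Real.cosh (2 * x / Real.sqrt 3))⁻¹) ^ 3
      ≤ ((Real.cosh (2 * x / Real.sqrt 3))⁻¹) ^ 1 :=
        pow_le_pow_of_le_one (by positivity) h1 (by norm_num)
    _ = _ := pow_one _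

/-- The antiderivative of the energy density. -/
noncomputable def solG (x : ℝ) : ℝ :=
  -(Real.sqrt 3 / 12) *
    (Real.sinh (2 * x / Real.sqrt 3) / Real.cosh (2 * x / Real.sqrt 3) ^ 2)

private lemma solG_hasDerivAt (x : ℝ) :
    HasDerivAt solG
      ((1/2) * (deriv soliton x) ^ 2 - (1/6) * (soliton x) ^ 6) x := by
  set c := Real.cosh (2 * x / Real.sqrt 3) with hc
  set s := Real.sinh (2 * x / Real.sqrt 3) with hs
  have hcpos : 0 < c := Real.cosh_pos _
  have hs2 : s ^ 2 = c ^ 2 - 1 := Real.sinh_sq _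
  have hsd : HasDerivAt (fun y : ℝ => Real.sinh (2 * y / Real.sqrt 3))
      (c * (2 / Real.sqrt 3)) x := (Real.hasDerivAt_sinh _).comp x (hu_deriv x)
  have hcd : HasDerivAt (fun y : ℝ => Real.cosh (2 * y / Real.sqrt 3))
      (s * (2 / Real.sqrt 3)) x := (Real.hasDerivAt_cosh _).comp x (hu_deriv x)
  have hc2 : HasDerivAt (fun y : ℝ => Real.cosh (2 * y / Real.sqrt 3) ^ 2)
      (2 * c ^ 1 * (s * (2 / Real.sqrt 3))) x := hcd.pow 2
  have hq : HasDerivAt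
      (fun y : ℝ => Real.sinh (2 * y / Real.sqrt 3) / Real.cosh (2 * y / Real.sqrt 3) ^ 2)
      ((c * (2 / Real.sqrt 3) * c ^ 2 - s * (2 * c ^ 1 * (s * (2 / Real.sqrt 3)))) / (c ^ 2) ^ 2)
      x := hsd.div hc2 (pow_ne_zero 2 hcpos.ne')
  have := hq.const_mul (-(Real.sqrt 3 / 12))
  have hval : -(Real.sqrt 3 / 12) *
      ((c * (2 / Real.sqrt 3) * c ^ 2 - s * (2 * c ^ 1 * (s * (2 / Real.sqrt 3)))) / (c ^ 2) ^ 2)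
      = -(1/6) * ((c ^ 3 - 2 * s ^ 2 * c) / (c ^ 2) ^ 2) := by
    field_simp [s3_pos.ne', hcpos.ne']
    ring
  refine this.congr_deriv ?_
  rw [deriv_soliton_sq, soliton_pow_six, ← hc, hval, hs2]
  field_simp
  ring

private lemma solG_zero : solG 0 = 0 := by
  simp [solG]

private lemma abs_solG_le (x : ℝ) :
    ‖solG x‖ ≤ (Real.sqrt 3 / 6) * Real.exp (-|x|) := by
  set c := Real.cosh (2 * x / Real.sqrt 3) with hc
  set s := Real.sinh (2 * x / Real.sqrt 3) with hs
  have hcpos : 0 < c := Real.cosh_pos _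
  have hsc : |s| ≤ c := by
    rw [hs, hc, Real.abs_sinh, ← Real.cosh_abs]
    exact (Real.sinh_lt_cosh _).le
  have h1 : |s / c ^ 2| ≤ c⁻¹ := by
    rw [abs_div, abs_of_nonneg (by positivity : (0:ℝ) ≤ c ^ 2), div_le_iff₀ (by positivity)]
    calc |s| ≤ c := hsc
      _ = c⁻¹ * c ^ 2 := by field_simp
  have h2 := inv_cosh_le x
  rw [solG, Real.norm_eq_abs, abs_mul, abs_neg, abs_of_nonneg (by positivity : (0:ℝ) ≤ Real.sqrt 3 / 12)]
  calc Real.sqrt 3 / 12 * |s / c ^ 2| ≤ Real.sqrt 3 / 12 * (2 * Real.exp (-|x|)) := by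
        apply mul_le_mul_of_nonneg_left (le_trans h1 h2) (by positivity)
    _ = (Real.sqrt 3 / 6) * Real.exp (-|x|) := by ring

private lemma solG_tendsto_atTop : Tendsto solG atTop (𝓝 0) := by
  apply squeeze_zero_norm abs_solG_le
  have h1 : Tendsto (fun x : ℝ => -|x|) atTop atBot :=
    tendsto_neg_atBot_iff.2 tendsto_abs_atTop_atTop
  have h2 : Tendsto (fun x : ℝ => Real.exp (-|x|)) atTop (𝓝 0) :=
    Real.tendsto_exp_atBot.comp h1
  simpa using h2.const_mul (Real.sqrt 3 / 6)

private lemma solG_tendsto_atBot : Tendsto solG atBot (𝓝 0) := by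
  apply squeeze_zero_norm abs_solG_le
  have h1 : Tendsto (fun x : ℝ => -|x|) atBot atBot :=
    tendsto_neg_atBot_iff.2 tendsto_abs_atBot_atTop
  have h2 : Tendsto (fun x : ℝ => Real.exp (-|x|)) atBot (𝓝 0) :=
    Real.tendsto_exp_atBot.comp h1
  simpa using h2.const_mul (Real.sqrt 3 / 6)

theorem stmt_3 :
    (1/2) * ∫ x : ℝ, (deriv soliton x) ^ 2
      = (1/6) * ∫ x : ℝ, (soliton x) ^ 6 := by
  have hA : Integrable fun x : ℝ => (deriv soliton x) ^ 2 := by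
    have : (fun x : ℝ => (deriv soliton x) ^ 2)
        = fun x : ℝ => (1/3) * ((Real.cosh (2 * x / Real.sqrt 3))⁻¹
            - ((Real.cosh (2 * x / Real.sqrt 3))⁻¹) ^ 3) :=
      funext deriv_soliton_sq
    rw [this]
    exact (integrable_inv_cosh.sub integrable_inv_cosh_cube).const_mul _
  have hB : Integrable fun x : ℝ => (soliton x) ^ 6 := by
    have : (fun x : ℝ => (soliton x) ^ 6)
        = fun x : ℝ => ((Real.cosh (2 * x / Real.sqrt 3))⁻¹) ^ 3 :=
      funext soliton_pow_six
    rw [this]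
    exact integrable_inv_cosh_cube
  have hh : Integrable fun x : ℝ =>
      (1/2) * (deriv soliton x) ^ 2 - (1/6) * (soliton x) ^ 6 :=
    (hA.const_mul _).sub (hB.const_mul _)
  have key : ∫ x : ℝ, ((1/2) * (deriv soliton x) ^ 2 - (1/6) * (soliton x) ^ 6) = 0 := by
    rw [← intervalIntegral.integral_Iic_add_Ioi (b := (0:ℝ)) hh.integrableOn hh.integrableOn]
    have hIic : ∫ x in Iic (0:ℝ),
        ((1/2) * (deriv soliton x) ^ 2 - (1/6) * (soliton x) ^ 6) = solG 0 - 0 :=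
      integral_Iic_of_hasDerivAt_of_tendsto'
        (fun x _ => solG_hasDerivAt x) hh.integrableOn solG_tendsto_atBot
    have hIoi : ∫ x in Ioi (0:ℝ),
        ((1/2) * (deriv soliton x) ^ 2 - (1/6) * (soliton x) ^ 6) = 0 - solG 0 :=
      integral_Ioi_of_hasDerivAt_of_tendsto'
        (fun x _ => solG_hasDerivAt x) hh.integrableOn solG_tendsto_atTop
    rw [hIic, hIoi]; ring
  rw [integral_sub (hA.const_mul _) (hB.const_mul _), integral_const_mul, integral_const_mul]
    at key
  linarith
end

section
/- Existence of stationary solutions on the pendant with Kirchhoff conditions: for every z > 0 there exist Λ > 0 and a function v : ℝ → ℝ, twice continuously differentiable on [0,1], with v(x) > 0 for all x ∈ [0,1], satisfying v''(x) + v(x)^5 = (Λ²/3)·v(x) for all x ∈ [0,1], together with the boundary conditions v(0) = φ_Λ(z/Λ), v'(0) = (2/√3)·φ_Λ(z/Λ)·(Λ² − φ_Λ(z/Λ)⁴)^(1/2) (equal to 2·|φ_Λ'(z/Λ)|, the Kirchhoff condition matching two translated solitons glued on the line), and v'(1) = 0 (the Kirchhoff condition at the terminal point of the pendant). -/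
open Real MeasureTheory Set Filter
open Topology

/-- The rescaled soliton `φ_Λ(x) = √Λ · φ(Λ x)`. -/
noncomputable def solitonL (Λ x : ℝ) : ℝ := Real.sqrt Λ * soliton (Λ * x)

namespace Stmt9Aux




noncomputable def qq (b s : ℝ) : ℝ := s ^ 2 - s ^ 6 + (b ^ 6 - b ^ 2)

noncomputable def rr (b s : ℝ) : ℝ :=
  s^5 + s^4*b + s^3*b^2 + s^2*b^3 + s*b^4 + b^5 - s - b

lemma qq_factor (b s : ℝ) : qq b s = (b - s) * rr b s := by unfold qq rr; ring

lemma rr_self (b : ℝ) : rr b b = 6*b^5 - 2*b := by unfold rr; ring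

lemma qq_self (b : ℝ) : qq b b = 0 := by unfold qq; ring

lemma rr_lower {b s : ℝ} (hb : 1 < b) (hs : 0 ≤ s) : b^5 - b ≤ rr b s := by
  have h0 : (0:ℝ) < b := by linarith
  have h1 : (1:ℝ) ≤ b^4 := one_le_pow₀ hb.le
  unfold rr
  have h2 : 0 ≤ s * (b^4 - 1) := mul_nonneg hs (by linarith)
  nlinarith [pow_nonneg hs 5, pow_nonneg hs 4, pow_nonneg hs 3, pow_nonneg hs 2,
    mul_nonneg (pow_nonneg hs 4) h0.le, mul_nonneg (pow_nonneg hs 3) (by positivity : (0:ℝ) ≤ b^2),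
    mul_nonneg (pow_nonneg hs 2) (by positivity : (0:ℝ) ≤ b^3)]

lemma bpow_pos {b : ℝ} (hb : 1 < b) : 0 < b^5 - b := by
  have h1 : (1:ℝ) < b^4 := one_lt_pow₀ hb (by norm_num)
  nlinarith

lemma rr_pos {b s : ℝ} (hb : 1 < b) (hs : 0 ≤ s) : 0 < rr b s :=
  lt_of_lt_of_le (bpow_pos hb) (rr_lower hb hs)

lemma rr_upper {b s : ℝ} (hb : 1 < b) (hs : 0 ≤ s) (hsb : s ≤ b) : rr b s ≤ 6*b^5 := by
  have h0 : (0:ℝ) < b := by linarith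
  have h5 : s^5 ≤ b^5 := pow_le_pow_left₀ hs hsb 5
  have h4 : s^4 ≤ b^4 := pow_le_pow_left₀ hs hsb 4
  have h3 : s^3 ≤ b^3 := pow_le_pow_left₀ hs hsb 3
  have h2 : s^2 ≤ b^2 := pow_le_pow_left₀ hs hsb 2
  unfold rr
  nlinarith [mul_le_mul_of_nonneg_right h4 h0.le,
    mul_le_mul_of_nonneg_right h3 (by positivity : (0:ℝ) ≤ b^2),
    mul_le_mul_of_nonneg_right h2 (by positivity : (0:ℝ) ≤ b^3),
    mul_le_mul_of_nonneg_right hsb (by positivity : (0:ℝ) ≤ b^4)]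

lemma qq_pos {b s : ℝ} (hb : 1 < b) (hs : 0 ≤ s) (hsb : s < b) : 0 < qq b s := by
  rw [qq_factor]; exact mul_pos (by linarith) (rr_pos hb hs)

lemma qq_nonneg {b s : ℝ} (hb : 1 < b) (hs : 0 ≤ s) (hsb : s ≤ b) : 0 ≤ qq b s := by
  rcases eq_or_lt_of_le hsb with rfl | h
  · rw [qq_self]
  · exact (qq_pos hb hs h).le

lemma qq_cont (b : ℝ) : Continuous (qq b) := by unfold qq; continuity

lemma rr_cont (b : ℝ) : Continuous (rr b) := by unfold rr; continuity

noncomputable def gg (b u : ℝ) : ℝ := Real.sqrt 3 / Real.sqrt (qq b u)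

noncomputable def FF (b s : ℝ) : ℝ := ∫ u in s..b, gg b u

lemma gg_meas (b : ℝ) : Measurable (gg b) :=
  measurable_const.div (continuous_sqrt.comp (qq_cont b)).measurable

lemma gg_nonneg (b u : ℝ) : 0 ≤ gg b u := div_nonneg (sqrt_nonneg _) (sqrt_nonneg _)

lemma gg_contAt {b u : ℝ} (hq : 0 < qq b u) : ContinuousAt (gg b) u := by
  apply ContinuousAt.div continuousAt_const
    (continuous_sqrt.continuousAt.comp (qq_cont b).continuousAt)
  exact ne_of_gt (sqrt_pos.2 hq)

lemma gg_pos {b u : ℝ} (hq : 0 < qq b u) : 0 < gg b u :=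
  div_pos (sqrt_pos.2 (by norm_num)) (sqrt_pos.2 hq)

/-- pointwise upper bound -/
lemma gg_le {b u A : ℝ} (hb : 1 < b) (hA : 0 < A) (hu : 0 ≤ u) (hub : u ≤ b)
    (hr : A ≤ rr b u) :
    gg b u ≤ Real.sqrt 3 / Real.sqrt A * (b - u) ^ (-(1/2) : ℝ) := by
  rcases eq_or_lt_of_le hub with rfl | hlt
  · simp [gg, qq_self]
  · have hbu : 0 < b - u := by linarith
    have h1 : Real.sqrt (A * (b - u)) ≤ Real.sqrt (qq b u) := by
      apply sqrt_le_sqrt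
      rw [qq_factor]
      nlinarith
    have h2 : 0 < Real.sqrt (A * (b - u)) := sqrt_pos.2 (by positivity)
    have h3 : gg b u ≤ Real.sqrt 3 / Real.sqrt (A * (b - u)) :=
      div_le_div_of_nonneg_left (sqrt_nonneg 3) h2 h1
    refine h3.trans (le_of_eq ?_)
    rw [sqrt_mul hA.le, Real.rpow_neg hbu.le, ← Real.sqrt_eq_rpow]
    field_simp

/-- pointwise lower bound -/
lemma le_gg {b u B : ℝ} (hb : 1 < b) (hu : 0 ≤ u) (hub : u ≤ b)
    (hr : rr b u ≤ B) :
    Real.sqrt 3 / Real.sqrt B * (b - u) ^ (-(1/2) : ℝ) ≤ gg b u := by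
  have hB : 0 < B := lt_of_lt_of_le (rr_pos hb hu) hr
  rcases eq_or_lt_of_le hub with rfl | hlt
  · simp [gg, qq_self]
  · have hbu : 0 < b - u := by linarith
    have hq : 0 < qq b u := qq_pos hb hu hlt
    have h1 : Real.sqrt (qq b u) ≤ Real.sqrt (B * (b - u)) := by
      apply sqrt_le_sqrt
      rw [qq_factor]
      nlinarith
    have h2 : 0 < Real.sqrt (qq b u) := sqrt_pos.2 hq
    have h3 : Real.sqrt 3 / Real.sqrt (B * (b - u)) ≤ gg b u :=
      div_le_div_of_nonneg_left (sqrt_nonneg 3) h2 h1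
    refine le_trans (le_of_eq ?_) h3
    rw [sqrt_mul hB.le, Real.rpow_neg hbu.le, ← Real.sqrt_eq_rpow]
    field_simp


lemma intInt_rpow_shift (b s1 s2 : ℝ) :
    IntervalIntegrable (fun u => (b - u) ^ (-(1/2) : ℝ)) volume s1 s2 := by
  have h := (intervalIntegral.intervalIntegrable_rpow' (a := b - s1) (b := b - s2)
    (r := (-(1/2) : ℝ)) (by norm_num)).comp_sub_left b
  simpa using h

lemma integral_rpow_shift {b s1 s2 : ℝ} (h1 : s1 ≤ s2) (h2 : s2 ≤ b) :
    ∫ u in s1..s2, (b - u) ^ (-(1/2) : ℝ)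
      = 2 * Real.sqrt (b - s1) - 2 * Real.sqrt (b - s2) := by
  have h := intervalIntegral.integral_comp_sub_left (a := s1) (b := s2)
    (fun x : ℝ => x ^ (-(1/2) : ℝ)) b
  rw [h, integral_rpow (Or.inl (by norm_num))]
  have e1 : (-(1/2) : ℝ) + 1 = 1/2 := by norm_num
  rw [e1, ← Real.sqrt_eq_rpow, ← Real.sqrt_eq_rpow]
  field_simp

lemma gg_intInt {b s1 s2 : ℝ} (hb : 1 < b) (h1 : 0 ≤ s1) (h12 : s1 ≤ s2) (h2b : s2 ≤ b) :
    IntervalIntegrable (gg b) volume s1 s2 := by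
  apply IntervalIntegrable.mono_fun
    ((intInt_rpow_shift b s1 s2).const_mul (Real.sqrt 3 / Real.sqrt (b^5 - b)))
    ((gg_meas b).aestronglyMeasurable.restrict)
  rw [Filter.EventuallyLE, ae_restrict_iff' measurableSet_uIoc]
  apply ae_of_all
  intro u hu
  rw [uIoc_of_le h12] at hu
  have hu0 : 0 ≤ u := le_trans h1 hu.1.le
  have hub : u ≤ b := le_trans hu.2 h2b
  have h := gg_le hb (bpow_pos hb) hu0 hub (rr_lower hb hu0)
  rw [Real.norm_eq_abs, Real.norm_eq_abs, abs_of_nonneg (gg_nonneg b u),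
    abs_of_nonneg]
  · exact h
  · have : (0:ℝ) ≤ (b - u) ^ (-(1/2) : ℝ) := Real.rpow_nonneg (by linarith) _
    positivity

lemma integral_gg_le {b s1 s2 A : ℝ} (hb : 1 < b) (hA : 0 < A) (h1 : 0 ≤ s1)
    (h12 : s1 ≤ s2) (h2b : s2 ≤ b) (hr : ∀ u ∈ Icc s1 s2, A ≤ rr b u) :
    ∫ u in s1..s2, gg b u
      ≤ Real.sqrt 3 / Real.sqrt A * (2 * Real.sqrt (b - s1) - 2 * Real.sqrt (b - s2)) := by
  have hint : IntervalIntegrable (fun u => Real.sqrt 3 / Real.sqrt A * (b - u) ^ (-(1/2) : ℝ))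
      volume s1 s2 := (intInt_rpow_shift b s1 s2).const_mul _
  calc ∫ u in s1..s2, gg b u
      ≤ ∫ u in s1..s2, Real.sqrt 3 / Real.sqrt A * (b - u) ^ (-(1/2) : ℝ) := by
        apply intervalIntegral.integral_mono_on h12 (gg_intInt hb h1 h12 h2b) hint
        intro u hu
        exact gg_le hb hA (le_trans h1 hu.1) (le_trans hu.2 h2b) (hr u hu)
    _ = _ := by
        rw [intervalIntegral.integral_const_mul, integral_rpow_shift h12 h2b]

lemma le_integral_gg {b s1 s2 B : ℝ} (hb : 1 < b) (h1 : 0 ≤ s1)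
    (h12 : s1 ≤ s2) (h2b : s2 ≤ b) (hr : ∀ u ∈ Icc s1 s2, rr b u ≤ B) :
    Real.sqrt 3 / Real.sqrt B * (2 * Real.sqrt (b - s1) - 2 * Real.sqrt (b - s2))
      ≤ ∫ u in s1..s2, gg b u := by
  have hint : IntervalIntegrable (fun u => Real.sqrt 3 / Real.sqrt B * (b - u) ^ (-(1/2) : ℝ))
      volume s1 s2 := (intInt_rpow_shift b s1 s2).const_mul _
  calc Real.sqrt 3 / Real.sqrt B * (2 * Real.sqrt (b - s1) - 2 * Real.sqrt (b - s2))
      = ∫ u in s1..s2, Real.sqrt 3 / Real.sqrt B * (b - u) ^ (-(1/2) : ℝ) := by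
        rw [intervalIntegral.integral_const_mul, integral_rpow_shift h12 h2b]
    _ ≤ ∫ u in s1..s2, gg b u := by
        apply intervalIntegral.integral_mono_on h12 hint (gg_intInt hb h1 h12 h2b)
        intro u hu
        exact le_gg hb (le_trans h1 hu.1) (le_trans hu.2 h2b) (hr u hu)

lemma FF_self (b : ℝ) : FF b b = 0 := intervalIntegral.integral_same

lemma FF_sub {b s1 s2 : ℝ} (hb : 1 < b) (h1 : 0 ≤ s1) (h12 : s1 ≤ s2) (h2b : s2 ≤ b) :
    FF b s1 = (∫ u in s1..s2, gg b u) + FF b s2 :=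
  (intervalIntegral.integral_add_adjacent_intervals (gg_intInt hb h1 h12 h2b)
    (gg_intInt hb (le_trans h1 h12) h2b le_rfl)).symm

lemma le_FF {b s : ℝ} (hb : 1 < b) (hs : 0 ≤ s) (hsb : s ≤ b) :
    Real.sqrt 3 / Real.sqrt (6*b^5) * (2 * Real.sqrt (b - s)) ≤ FF b s := by
  have h := le_integral_gg (s1 := s) (s2 := b) hb hs hsb le_rfl
    (fun u hu => rr_upper hb (le_trans hs hu.1) hu.2)
  simpa [FF, sub_self, Real.sqrt_zero] using h

lemma FF_le {b s : ℝ} (hb : 1 < b) (hs : 0 ≤ s) (hsb : s ≤ b) :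
    FF b s ≤ Real.sqrt 3 / Real.sqrt (b^5 - b) * (2 * Real.sqrt (b - s)) := by
  have h := integral_gg_le (s1 := s) (s2 := b) hb (bpow_pos hb) hs hsb le_rfl
    (fun u hu => rr_lower hb (le_trans hs hu.1))
  simpa [FF, sub_self, Real.sqrt_zero] using h

lemma FF_nonneg {b s : ℝ} (hb : 1 < b) (hs : 0 ≤ s) (hsb : s ≤ b) : 0 ≤ FF b s := by
  refine le_trans ?_ (le_FF hb hs hsb)
  have : (0:ℝ) < b := by linarith
  positivity

lemma FF_pos {b s : ℝ} (hb : 1 < b) (hs : 0 ≤ s) (hsb : s < b) : 0 < FF b s := by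
  refine lt_of_lt_of_le ?_ (le_FF hb hs hsb.le)
  have hb0 : (0:ℝ) < b := by linarith
  have h1 : 0 < Real.sqrt (b - s) := sqrt_pos.2 (by linarith)
  positivity

lemma FF_strictAntiOn {b : ℝ} (hb : 1 < b) : StrictAntiOn (FF b) (Icc 0 b) := by
  intro s1 hs1 s2 hs2 h12
  have key : 0 < ∫ u in s1..s2, gg b u := by
    refine lt_of_lt_of_le ?_ (le_integral_gg (B := 6*b^5) hb hs1.1 h12.le hs2.2
      (fun u hu => rr_upper hb (le_trans hs1.1 hu.1) (le_trans hu.2 hs2.2)))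
    have hb0 : (0:ℝ) < b := by linarith
    have hlt : Real.sqrt (b - s2) < Real.sqrt (b - s1) :=
      Real.sqrt_lt_sqrt (by linarith [hs2.2]) (by linarith)
    have h3 : (0:ℝ) < Real.sqrt 3 / Real.sqrt (6*b^5) := by positivity
    nlinarith
  have := FF_sub hb hs1.1 h12.le hs2.2
  linarith


section
variable {b : ℝ}

lemma gg_smeas (b : ℝ) (l : Filter ℝ) : StronglyMeasurableAtFilter (gg b) l volume :=
  ⟨univ, univ_mem, (gg_meas b).aestronglyMeasurable.restrict⟩

lemma FF_hasDerivAt (hb : 1 < b) {s : ℝ} (hs : 0 ≤ s) (hsb : s < b) :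
    HasDerivAt (FF b) (-(gg b s)) s :=
  intervalIntegral.integral_hasDerivAt_left (gg_intInt hb hs hsb.le le_rfl)
    (gg_smeas b _) (gg_contAt (qq_pos hb hs hsb))

lemma FF_contOn (hb : 1 < b) : ContinuousOn (FF b) (Icc 0 b) := by
  intro s hs
  rcases eq_or_lt_of_le hs.2 with rfl | hlt
  · rw [ContinuousWithinAt, FF_self]
    have h0 : Tendsto (fun u : ℝ => Real.sqrt 3 / Real.sqrt (s^5 - s) * (2 * Real.sqrt (s - u)))
        (𝓝[Icc 0 s] s) (𝓝 0) := by
      have hc : ContinuousAt (fun u : ℝ => Real.sqrt 3 / Real.sqrt (s^5 - s) * (2 * Real.sqrt (s - u))) s := by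
        apply ContinuousAt.mul continuousAt_const
        exact (continuous_sqrt.comp (continuous_const.sub continuous_id)).continuousAt.const_mul _
      have h1 := hc.continuousWithinAt (s := Icc 0 s)
      simpa [ContinuousWithinAt, sub_self] using h1
    apply squeeze_zero'
    · filter_upwards [self_mem_nhdsWithin] with u hu
      exact FF_nonneg hb hu.1 hu.2
    · filter_upwards [self_mem_nhdsWithin] with u hu
      exact FF_le hb hu.1 hu.2
    · exact h0
  · exact ((FF_hasDerivAt hb hs.1 hlt).continuousAt).continuousWithinAt

open Classical in
noncomputable def WW (b t : ℝ) : ℝ :=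
  if h : ∃ s ∈ Icc 0 b, FF b s = -t then h.choose else 0

lemma WW_spec {t : ℝ} (h : ∃ s ∈ Icc 0 b, FF b s = -t) :
    WW b t ∈ Icc 0 b ∧ FF b (WW b t) = -t := by
  rw [WW, dif_pos h]
  exact ⟨h.choose_spec.1, h.choose_spec.2⟩

lemma exists_WW (hb : 1 < b) {t : ℝ} (ht : t ∈ Icc (-(FF b 0)) 0) :
    ∃ s ∈ Icc 0 b, FF b s = -t := by
  have hb0 : (0:ℝ) ≤ b := by linarith
  have h := intermediate_value_Icc' hb0 (FF_contOn hb)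
  have hmem : -t ∈ Icc (FF b b) (FF b 0) := by
    rw [FF_self]
    exact ⟨by linarith [ht.2], by linarith [ht.1]⟩
  obtain ⟨s, hs, hfs⟩ := h hmem
  exact ⟨s, hs, hfs⟩

lemma WW_eq (hb : 1 < b) {t s : ℝ} (hs : s ∈ Icc 0 b) (h : FF b s = -t) :
    WW b t = s := by
  have hx : ∃ s ∈ Icc 0 b, FF b s = -t := ⟨s, hs, h⟩
  have h2 := WW_spec hx
  exact (FF_strictAntiOn hb).injOn h2.1 hs (h2.2.trans h.symm)

lemma WW_zero (hb : 1 < b) : WW b 0 = b :=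
  WW_eq hb ⟨by linarith, le_rfl⟩ (by rw [FF_self]; ring)

lemma WW_strictMonoOn (hb : 1 < b) : StrictMonoOn (WW b) (Icc (-(FF b 0)) 0) := by
  intro t1 h1 t2 h2 h12
  have s1 := WW_spec (exists_WW hb h1)
  have s2 := WW_spec (exists_WW hb h2)
  by_contra hcon
  push_neg at hcon
  have hle : FF b (WW b t1) ≤ FF b (WW b t2) :=
    (FF_strictAntiOn hb).antitoneOn s2.1 s1.1 hcon
  rw [s1.2, s2.2] at hle
  linarith

lemma mem_image_WW (hb : 1 < b) {s : ℝ} (hs : s ∈ Icc 0 b) :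
    s ∈ WW b '' Icc (-(FF b 0)) 0 := by
  have hb0 : (0:ℝ) < b := by linarith
  refine ⟨-(FF b s), mem_Icc.mpr ⟨?_, ?_⟩, WW_eq hb hs (by ring)⟩
  · have := (FF_strictAntiOn hb).antitoneOn ⟨le_rfl, hb0.le⟩ hs hs.1
    linarith
  · have := FF_nonneg hb hs.1 hs.2
    linarith

lemma WW_contOn (hb : 1 < b) : ContinuousOn (WW b) (Icc (-(FF b 0)) 0) := by
  have hb0 : (0:ℝ) < b := by linarith
  have hL0 : 0 < FF b 0 := FF_pos hb le_rfl hb0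
  have hmono := WW_strictMonoOn hb
  intro t ht
  have hleft : -(FF b 0) < t → ContinuousWithinAt (WW b) (Iic t) t := by
    intro htl
    apply hmono.continuousWithinAt_left_of_image_mem_nhdsWithin
    · refine mem_nhdsWithin.2 ⟨Ioi (-(FF b 0)), isOpen_Ioi, htl, ?_⟩
      intro u hu
      simp only [mem_inter_iff, mem_Ioi, mem_Iic] at hu
      exact mem_Icc.mpr ⟨hu.1.le, hu.2.trans ht.2⟩
    · have hWpos : 0 < WW b t := by
        have h1 := hmono (left_mem_Icc.2 (by linarith)) ht htl
        have h0 : WW b (-(FF b 0)) = 0 := WW_eq hb ⟨le_rfl, hb0.le⟩ (by ring)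
        rw [h0] at h1
        exact h1
      have hWb : WW b t ≤ b := (WW_spec (exists_WW hb ht)).1.2
      refine mem_of_superset (mem_nhdsWithin.2 ⟨Ioo 0 (b+1), isOpen_Ioo,
        ⟨hWpos, by linarith⟩, ?_⟩) (fun s hs => mem_image_WW hb hs)
      intro u hu
      simp only [mem_inter_iff, mem_Ioo, mem_Iic] at hu
      exact mem_Icc.mpr ⟨hu.1.1.le, hu.2.trans hWb⟩
  have hright : t < 0 → ContinuousWithinAt (WW b) (Ici t) t := by
    intro htr
    apply hmono.continuousWithinAt_right_of_image_mem_nhdsWithin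
    · refine mem_nhdsWithin.2 ⟨Iio 0, isOpen_Iio, htr, ?_⟩
      intro u hu
      simp only [mem_inter_iff, mem_Iio, mem_Ici] at hu
      exact mem_Icc.mpr ⟨le_trans ht.1 hu.2, hu.1.le⟩
    · have hWlt : WW b t < b := by
        have h1 := hmono ht (right_mem_Icc.2 (by linarith)) htr
        rw [WW_zero hb] at h1
        exact h1
      have hW0 : 0 ≤ WW b t := (WW_spec (exists_WW hb ht)).1.1
      refine mem_of_superset (mem_nhdsWithin.2 ⟨Ioo (-1) b, isOpen_Ioo,
        ⟨by linarith, hWlt⟩, ?_⟩) (fun s hs => mem_image_WW hb hs)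
      intro u hu
      simp only [mem_inter_iff, mem_Ioo, mem_Ici] at hu
      exact mem_Icc.mpr ⟨le_trans hW0 hu.2, hu.1.2.le⟩
  rcases eq_or_lt_of_le ht.1 with rfl | htl
  · exact (hright (by linarith)).mono Icc_subset_Ici_self
  · rcases eq_or_lt_of_le ht.2 with rfl | htr
    · exact (hleft htl).mono Icc_subset_Iic_self
    · refine (((hleft htl).union (hright htr)).mono ?_)
      intro u _
      rcases le_total u t with h | h
      exacts [Or.inl h, Or.inr h]

end

noncomputable def DD (b t : ℝ) : ℝ := Real.sqrt (qq b (WW b t)) / Real.sqrt 3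

noncomputable def EE (b t : ℝ) : ℝ := WW b t / 3 - (WW b t) ^ 5

section
variable {b : ℝ}

lemma WW_mem (hb : 1 < b) {t : ℝ} (ht : t ∈ Icc (-(FF b 0)) 0) :
    WW b t ∈ Icc 0 b ∧ FF b (WW b t) = -t := WW_spec (exists_WW hb ht)

lemma WW_mem_Ioo (hb : 1 < b) {t : ℝ} (ht : t ∈ Ioo (-(FF b 0)) 0) :
    WW b t ∈ Ioo 0 b := by
  have hb0 : (0:ℝ) < b := by linarith
  have h1 := WW_strictMonoOn hb (left_mem_Icc.2 (by linarith [FF_nonneg hb le_rfl hb0.le]))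
    (Ioo_subset_Icc_self ht) ht.1
  have h2 := WW_strictMonoOn hb (Ioo_subset_Icc_self ht)
    (right_mem_Icc.2 (by linarith [FF_nonneg hb le_rfl hb0.le])) ht.2
  have h0 : WW b (-(FF b 0)) = 0 := WW_eq hb ⟨le_rfl, hb0.le⟩ (by ring)
  rw [h0] at h1
  rw [WW_zero hb] at h2
  exact ⟨h1, h2⟩

lemma DD_zero (hb : 1 < b) : DD b 0 = 0 := by
  rw [DD, WW_zero hb, qq_self, Real.sqrt_zero, zero_div]

lemma WW_hasDerivAt (hb : 1 < b) {t : ℝ} (ht : t ∈ Ioo (-(FF b 0)) 0) :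
    HasDerivAt (WW b) (DD b t) t := by
  have hmem := WW_mem_Ioo hb ht
  have hq : 0 < qq b (WW b t) := qq_pos hb hmem.1.le hmem.2
  have hgg : 0 < gg b (WW b t) := gg_pos hq
  have hf : HasDerivAt (fun s => -(FF b s)) (gg b (WW b t)) (WW b t) := by
    have h := (FF_hasDerivAt hb hmem.1.le hmem.2).neg
    rw [neg_neg] at h
    exact h
  have hg : ContinuousAt (WW b) t :=
    (WW_contOn hb).continuousAt (Icc_mem_nhds ht.1 ht.2)
  have hfg : ∀ᶠ y in 𝓝 t, -(FF b (WW b y)) = y := by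
    filter_upwards [Icc_mem_nhds ht.1 ht.2] with y hy
    rw [(WW_mem hb hy).2]
    ring
  have h := HasDerivAt.of_local_left_inverse hg hf (ne_of_gt hgg) hfg
  have : (gg b (WW b t))⁻¹ = DD b t := by
    rw [gg, inv_div, DD]
  rwa [this] at h

lemma DD_hasDerivAt (hb : 1 < b) {t : ℝ} (ht : t ∈ Ioo (-(FF b 0)) 0) :
    HasDerivAt (DD b) (EE b t) t := by
  have hmem := WW_mem_Ioo hb ht
  set s₀ := WW b t with hs₀
  have hq : 0 < qq b s₀ := qq_pos hb hmem.1.le hmem.2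
  have hW : HasDerivAt (WW b) (DD b t) t := WW_hasDerivAt hb ht
  have hqq : HasDerivAt (fun y : ℝ => qq b y) (2 * s₀ - 6 * s₀ ^ 5) s₀ := by
    have h := ((hasDerivAt_pow 2 s₀).sub (hasDerivAt_pow 6 s₀)).add_const (b ^ 6 - b ^ 2)
    have e : (fun y : ℝ => y ^ 2 - y ^ 6 + (b ^ 6 - b ^ 2)) = fun y : ℝ => qq b y := by
      funext y; rw [qq]
    simp only [Pi.sub_apply] at h
    rw [e] at h
    refine h.congr_deriv ?_
    push_cast
    ring
  have hcomp : HasDerivAt (fun u => qq b (WW b u)) ((2 * s₀ - 6 * s₀ ^ 5) * DD b t) t :=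
    by have := hqq.comp t hW; exact this
  have hsq := (Real.hasDerivAt_sqrt (ne_of_gt hq)).comp t hcomp
  have hdiv := hsq.div_const (Real.sqrt 3)
  have heq : 1 / (2 * Real.sqrt (qq b s₀)) * ((2 * s₀ - 6 * s₀ ^ 5) * DD b t) / Real.sqrt 3
      = EE b t := by
    rw [DD, EE, ← hs₀]
    have h3 : Real.sqrt 3 * Real.sqrt 3 = 3 := Real.mul_self_sqrt (by norm_num)
    have hq' : Real.sqrt (qq b s₀) ≠ 0 := ne_of_gt (Real.sqrt_pos.2 hq)
    have h3' : Real.sqrt 3 ≠ 0 := by positivity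
    field_simp
    ring_nf
    rw [Real.sq_sqrt (show (0:ℝ) ≤ 3 by norm_num)]
    ring
  rw [heq] at hdiv
  exact hdiv.congr_deriv rfl
end

section
variable {b : ℝ}

lemma WW_deriv_zero (hb : 1 < b) :
    HasDerivWithinAt (WW b) (DD b 0) (Iic 0) 0 := by
  have hb0 : (0:ℝ) < b := by linarith
  have hL0 : 0 < FF b 0 := FF_pos hb le_rfl hb0
  rw [hasDerivWithinAt_iff_tendsto_slope, DD_zero hb]
  have habs : ∀ᶠ t : ℝ in 𝓝[Iic 0 \ {0}] 0, |t - 0| < FF b 0 :=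
    (eventually_abs_sub_lt 0 hL0).filter_mono nhdsWithin_le_nhds
  have hkey : ∀ᶠ t : ℝ in 𝓝[Iic 0 \ {0}] 0,
      0 ≤ slope (WW b) 0 t ∧ slope (WW b) 0 t ≤ b ^ 5 / 2 * |t| := by
    filter_upwards [self_mem_nhdsWithin, habs] with t ht habs'
    have ht0 : t < 0 := lt_of_le_of_ne ht.1 ht.2
    have htL : -(FF b 0) < t := by
      rw [sub_zero, abs_of_neg ht0] at habs'
      linarith
    have hmem := WW_mem hb ⟨htL.le, ht0.le⟩
    set s := WW b t with hs_def
    have hs0 : 0 ≤ s := hmem.1.1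
    have hsb : s ≤ b := hmem.1.2
    have hFF : FF b s = -t := hmem.2
    have hslope : slope (WW b) 0 t = (b - s) / (-t) := by
      rw [slope_def_field, WW_zero hb, sub_zero, ← hs_def, div_neg, ← neg_div, neg_sub]
    set k := Real.sqrt 3 / Real.sqrt (6 * b ^ 5) with hk_def
    have hkpos : 0 < k := by positivity
    have h1 : k * (2 * Real.sqrt (b - s)) ≤ -t := by
      rw [← hFF]; exact le_FF hb hs0 hsb
    have h2 : Real.sqrt (b - s) ≤ -t / (2 * k) := by
      rw [le_div_iff₀ (by positivity)]
      linarith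
    have h3 : b - s ≤ (-t / (2 * k)) ^ 2 := by
      have h := pow_le_pow_left₀ (Real.sqrt_nonneg (b - s)) h2 2
      rwa [Real.sq_sqrt (by linarith)] at h
    have hk2 : k ^ 2 = 3 / (6 * b ^ 5) := by
      rw [hk_def, div_pow, Real.sq_sqrt (by norm_num), Real.sq_sqrt (by positivity)]
    have h4 : b - s ≤ t ^ 2 * b ^ 5 / 2 := by
      have h5 : (-t / (2 * k)) ^ 2 = t ^ 2 / (4 * k ^ 2) := by ring_nf
      rw [h5, hk2] at h3
      have hb5 : (0:ℝ) < b ^ 5 := by positivity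
      calc b - s ≤ t ^ 2 / (4 * (3 / (6 * b ^ 5))) := h3
        _ = t ^ 2 * b ^ 5 / 2 := by field_simp; ring
    constructor
    · rw [hslope]
      exact div_nonneg (by linarith) (by linarith)
    · rw [hslope, div_le_iff₀ (by linarith : (0:ℝ) < -t)]
      have he : b ^ 5 / 2 * |t| * -t = b ^ 5 * t ^ 2 / 2 := by
        rw [abs_of_neg ht0]; ring
      rw [he]
      linarith
  apply squeeze_zero' (hkey.mono fun t h => h.1) (hkey.mono fun t h => h.2)
  have h0 : Tendsto (fun t : ℝ => b ^ 5 / 2 * |t|) (𝓝 0) (𝓝 (b ^ 5 / 2 * |0|)) :=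
    (continuous_const.mul continuous_abs).tendsto 0
  simpa using h0.mono_left nhdsWithin_le_nhds

lemma EE_zero (hb : 1 < b) : EE b 0 = -(rr b b / 6) := by
  rw [EE, WW_zero hb, rr_self]; ring

set_option maxHeartbeats 1600000 in
lemma DD_deriv_zero (hb : 1 < b) :
    HasDerivWithinAt (DD b) (EE b 0) (Iic 0) 0 := by
  have hb0 : (0:ℝ) < b := by linarith
  have hL0 : 0 < FF b 0 := FF_pos hb le_rfl hb0
  set L := rr b b with hL_def
  have hLpos : 0 < L := rr_pos hb hb0.le
  rw [hasDerivWithinAt_iff_tendsto_slope, EE_zero hb]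
  rw [Metric.tendsto_nhds]
  intro ε' hε'
  set ε := min ε' (L / 2) with hε_def
  have hεpos : 0 < ε := lt_min hε' (by linarith)
  have hεL : ε ≤ L / 2 := min_le_right _ _
  have hεε' : ε ≤ ε' := min_le_left _ _
  -- δ₁ from continuity of rr b at b
  have hrrc : ContinuousAt (rr b) b := (rr_cont b).continuousAt
  obtain ⟨δ₁, hδ₁pos, hδ₁⟩ := Metric.continuousAt_iff.1 hrrc ε hεpos
  -- δ₂ from continuity of WW b at 0 within Icc
  have hWc : ContinuousWithinAt (WW b) (Icc (-(FF b 0)) 0) 0 :=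
    WW_contOn hb 0 (right_mem_Icc.2 (by linarith))
  rw [ContinuousWithinAt, WW_zero hb] at hWc
  obtain ⟨δ₂, hδ₂pos, hδ₂⟩ := Metric.tendsto_nhdsWithin_nhds.1 hWc δ₁ hδ₁pos
  have habs : ∀ᶠ t : ℝ in 𝓝[Iic 0 \ {0}] 0, |t - 0| < min δ₂ (FF b 0) :=
    (eventually_abs_sub_lt 0 (lt_min hδ₂pos hL0)).filter_mono nhdsWithin_le_nhds
  filter_upwards [self_mem_nhdsWithin, habs] with t ht habs'
  have ht0 : t < 0 := lt_of_le_of_ne ht.1 ht.2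
  rw [sub_zero, abs_of_neg ht0] at habs'
  have htL : -(FF b 0) < t := by
    have := lt_of_lt_of_le habs' (min_le_right δ₂ (FF b 0))
    linarith
  have htIcc : t ∈ Icc (-(FF b 0)) 0 := ⟨htL.le, ht0.le⟩
  have hmem := WW_mem hb htIcc
  set s := WW b t with hs_def
  have hs0 : 0 ≤ s := hmem.1.1
  have hsb : s ≤ b := hmem.1.2
  have hFF : FF b s = -t := hmem.2
  have hsneq : s ≠ b := by
    intro heq
    rw [heq, FF_self] at hFF
    linarith
  have hsblt : s < b := lt_of_le_of_ne hsb hsneq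
  have h1 : -t < δ₂ := habs'.trans_le (min_le_left _ _)
  have hdist : dist s b < δ₁ := hδ₂ htIcc (by
    rw [Real.dist_eq, sub_zero, abs_of_neg ht0]
    exact h1)
  -- bounds on rr over [s,b]
  have hrr : ∀ u ∈ Icc s b, L - ε ≤ rr b u ∧ rr b u ≤ L + ε := by
    intro u hu
    have : dist u b < δ₁ := by
      rw [Real.dist_eq, abs_of_nonpos (by linarith [hu.2] : u - b ≤ 0)]
      rw [Real.dist_eq, abs_of_nonpos (by linarith : s - b ≤ 0)] at hdist
      linarith [hu.1]
    have := hδ₁ this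
    rw [Real.dist_eq] at this
    have := abs_lt.1 this
    exact ⟨by linarith [this.1], by linarith [this.2]⟩
  have hA : 0 < L - ε := by linarith
  have hB : 0 < L + ε := by linarith
  -- FF bounds
  have hup : -t ≤ Real.sqrt 3 / Real.sqrt (L - ε) * (2 * Real.sqrt (b - s)) := by
    rw [← hFF]
    have h := integral_gg_le (s1 := s) (s2 := b) hb hA hs0 hsb le_rfl
      (fun u hu => (hrr u hu).1)
    simpa [FF, sub_self, Real.sqrt_zero] using h
  have hlo : Real.sqrt 3 / Real.sqrt (L + ε) * (2 * Real.sqrt (b - s)) ≤ -t := by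
    rw [← hFF]
    have h := le_integral_gg (s1 := s) (s2 := b) hb hs0 hsb le_rfl
      (fun u hu => (hrr u hu).2)
    simpa [FF, sub_self, Real.sqrt_zero] using h
  -- DD bounds
  have hqs : qq b s = (b - s) * rr b s := qq_factor b s
  have hrs := hrr s ⟨le_rfl, hsb⟩
  set σ := Real.sqrt (b - s) with hσ_def
  have hσpos : 0 < σ := Real.sqrt_pos.2 (by linarith)
  set α := Real.sqrt (L - ε) with hα_def
  set β := Real.sqrt (L + ε) with hβ_def
  have hαpos : 0 < α := Real.sqrt_pos.2 hA
  have hβpos : 0 < β := Real.sqrt_pos.2 hB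
  have hα2 : α ^ 2 = L - ε := Real.sq_sqrt hA.le
  have hβ2 : β ^ 2 = L + ε := Real.sq_sqrt hB.le
  set τ := Real.sqrt 3 with hτ_def
  have hτpos : 0 < τ := Real.sqrt_pos.2 (by norm_num)
  have hτ2 : τ ^ 2 = 3 := Real.sq_sqrt (by norm_num)
  have hDτ : DD b t * τ = Real.sqrt (qq b s) := by
    rw [DD, ← hs_def, div_mul_cancel₀ _ (ne_of_gt hτpos)]
  have hDlo' : σ * α ≤ DD b t * τ := by
    rw [hDτ, hσ_def, hα_def, ← Real.sqrt_mul (by linarith : (0:ℝ) ≤ b - s)]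
    apply Real.sqrt_le_sqrt
    rw [hqs]
    exact mul_le_mul_of_nonneg_left hrs.1 (by linarith)
  have hDup' : DD b t * τ ≤ σ * β := by
    rw [hDτ, hσ_def, hβ_def, ← Real.sqrt_mul (by linarith : (0:ℝ) ≤ b - s)]
    apply Real.sqrt_le_sqrt
    rw [hqs]
    exact mul_le_mul_of_nonneg_left hrs.2 (by linarith)
  have hτ2' : τ * τ = 3 := Real.mul_self_sqrt (by norm_num)
  have hα2' : α * α = L - ε := Real.mul_self_sqrt hA.le
  have hβ2' : β * β = L + ε := Real.mul_self_sqrt hB.le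
  have htpos : 0 < -t := by linarith
  have hup' : α * (-t) ≤ 2 * σ * τ := by
    have h := mul_le_mul_of_nonneg_left hup hαpos.le
    have e : α * (τ / α * (2 * σ)) = 2 * σ * τ := by field_simp
    rw [e] at h
    exact h
  have hlo' : 2 * σ * τ ≤ β * (-t) := by
    have h := mul_le_mul_of_nonneg_left hlo hβpos.le
    have e : β * (τ / β * (2 * σ)) = 2 * σ * τ := by field_simp
    rw [e] at h
    exact h
  have hratio1 : (L - ε) / 6 ≤ DD b t / (-t) := by
    rw [div_le_div_iff₀ (by norm_num) htpos]
    have h5 : (L - ε) * (-t) ≤ 2 * σ * α * τ := by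
      have h := mul_le_mul_of_nonneg_left hup' hαpos.le
      calc (L - ε) * (-t) = α * (α * (-t)) := by rw [← hα2']; ring
        _ ≤ α * (2 * σ * τ) := h
        _ = 2 * σ * α * τ := by ring
    have h6 : 2 * σ * α * τ ≤ DD b t * 6 := by
      have h := mul_le_mul_of_nonneg_left hDlo' (by positivity : (0:ℝ) ≤ 2 * τ)
      calc 2 * σ * α * τ = 2 * τ * (σ * α) := by ring
        _ ≤ 2 * τ * (DD b t * τ) := h
        _ = DD b t * (2 * (τ * τ)) := by ring
        _ = DD b t * 6 := by rw [hτ2']; ring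
    linarith
  have hratio2 : DD b t / (-t) ≤ (L + ε) / 6 := by
    rw [div_le_div_iff₀ htpos (by norm_num)]
    have h6 : DD b t * 6 ≤ 2 * σ * β * τ := by
      have h := mul_le_mul_of_nonneg_left hDup' (by positivity : (0:ℝ) ≤ 2 * τ)
      calc DD b t * 6 = 2 * τ * (DD b t * τ) := by linear_combination (-2 * DD b t) * hτ2'
        _ ≤ 2 * τ * (σ * β) := h
        _ = 2 * σ * β * τ := by ring
    have h5 : 2 * σ * β * τ ≤ (L + ε) * (-t) := by
      have h := mul_le_mul_of_nonneg_left hlo' hβpos.le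
      calc 2 * σ * β * τ = β * (2 * σ * τ) := by ring
        _ ≤ β * (β * (-t)) := h
        _ = (L + ε) * (-t) := by rw [← hβ2']; ring
    linarith
  have hslope : slope (DD b) 0 t = DD b t / t := by
    rw [slope_def_field, DD_zero hb, sub_zero, sub_zero]
  rw [hslope, Real.dist_eq]
  have he : DD b t / t - -(L / 6) = L / 6 - DD b t / -t := by
    rw [div_neg]
    ring
  rw [he]
  have habs2 : |L / 6 - DD b t / -t| ≤ ε / 6 :=
    abs_le.2 ⟨by linarith, by linarith⟩
  linarith
end

end Stmt9Aux

open Stmt9Aux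

set_option maxHeartbeats 2000000 in
theorem stmt_9 (z : ℝ) (hz : 0 < z) :
    ∃ Λ : ℝ, 0 < Λ ∧ ∃ v v' v'' : ℝ → ℝ,
      ContinuousOn v'' (Set.Icc 0 1) ∧
      (∀ x ∈ Set.Icc (0:ℝ) 1, HasDerivWithinAt v (v' x) (Set.Icc 0 1) x) ∧
      (∀ x ∈ Set.Icc (0:ℝ) 1, HasDerivWithinAt v' (v'' x) (Set.Icc 0 1) x) ∧
      (∀ x ∈ Set.Icc (0:ℝ) 1, 0 < v x) ∧
      (∀ x ∈ Set.Icc (0:ℝ) 1, v'' x + (v x) ^ 5 = (Λ ^ 2 / 3) * v x) ∧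
      v 0 = solitonL Λ (z / Λ) ∧
      v' 0 = (2 / Real.sqrt 3) * solitonL Λ (z / Λ)
        * Real.sqrt (Λ ^ 2 - (solitonL Λ (z / Λ)) ^ 4) ∧
      v' 1 = 0 := by
  classical
  -- the soliton value at z
  set p := soliton z with hp_def
  have hcosh : 1 < Real.cosh (2 * z / Real.sqrt 3) :=
    Real.one_lt_cosh.2 (by positivity)
  have hp0 : 0 < p := Real.rpow_pos_of_pos (by positivity) _
  have hp1 : p < 1 := by
    rw [hp_def, soliton]
    exact Real.rpow_lt_one_of_one_lt_of_neg hcosh (by norm_num)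
  have hp4 : p ^ 4 < 1 := by
    calc p ^ 4 ≤ p := pow_le_of_le_one hp0.le hp1.le (by norm_num)
    _ < 1 := hp1
  set c := 3 * (p ^ 2 - p ^ 6) with hc_def
  have hc : 0 < c := by nlinarith [pow_pos hp0 2]
  -- find b > 1 with b^6 - b^2 = c
  obtain ⟨b, hbmem, hGb⟩ : ∃ b ∈ Icc (1:ℝ) (2 + c), b ^ 6 - b ^ 2 = c := by
    have hcont : ContinuousOn (fun s : ℝ => s ^ 6 - s ^ 2) (Icc 1 (2 + c)) := by
      apply Continuous.continuousOn
      continuity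
    have h1 : (1:ℝ) ≤ 2 + c := by linarith
    have hsub := intermediate_value_Icc h1 hcont
    have hmem : c ∈ Icc ((1:ℝ) ^ 6 - 1 ^ 2) ((2 + c) ^ 6 - (2 + c) ^ 2) := by
      constructor
      · norm_num
        exact hc.le
      · have hy : (4:ℝ) + 4 * c ≤ (2 + c) ^ 2 := by nlinarith [sq_nonneg c]
        have hy4 : (4:ℝ) ≤ (2 + c) ^ 2 := by linarith
        have he : ((2 + c):ℝ) ^ 6 = ((2 + c) ^ 2) ^ 3 := by ring
        set y := ((2 + c):ℝ) ^ 2 with hy_def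
        rw [he]
        nlinarith [mul_le_mul_of_nonneg_left hy4 (by positivity : (0:ℝ) ≤ y),
          mul_le_mul_of_nonneg_left hy4 (by positivity : (0:ℝ) ≤ y * y)]
    obtain ⟨b, hb1, hb2⟩ := hsub hmem
    exact ⟨b, hb1, hb2⟩
  have hb : 1 < b := by
    rcases eq_or_lt_of_le hbmem.1 with heq | h
    · exfalso
      rw [← heq] at hGb
      norm_num at hGb
      linarith
    · exact h
  have hb0 : (0:ℝ) < b := by linarith
  have hbc : b ^ 6 - b ^ 2 = 3 * (p ^ 2 - p ^ 6) := hGb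
  have hpb : p < b := hp1.trans hb
  -- the parameter Λ
  set Λ := FF b p with hΛ_def
  have hΛpos : 0 < Λ := FF_pos hb hp0.le hpb
  have hΛ0pos : 0 < FF b 0 := FF_pos hb le_rfl hb0
  have hΛlt : Λ < FF b 0 := FF_strictAntiOn hb ⟨le_rfl, hb0.le⟩ ⟨hp0.le, hpb.le⟩ hp0
  have hsqΛ : Real.sqrt Λ ^ 2 = Λ := Real.sq_sqrt hΛpos.le
  have hsqΛpos : 0 < Real.sqrt Λ := Real.sqrt_pos.2 hΛpos
  -- key point values
  have hWneg : WW b (-Λ) = p := WW_eq hb ⟨hp0.le, hpb.le⟩ (by rw [neg_neg])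
  -- mappings
  have hmap : ∀ x ∈ Icc (0:ℝ) 1, Λ * x - Λ ∈ Icc (-(FF b 0)) 0 := by
    intro x hx
    constructor
    · nlinarith [hx.1]
    · nlinarith [hx.2]
  have hmapo : ∀ x ∈ Ico (0:ℝ) 1, Λ * x - Λ ∈ Ioo (-(FF b 0)) 0 := by
    intro x hx
    constructor
    · nlinarith [hx.1]
    · nlinarith [hx.2]
  have hmaps : MapsTo (fun x : ℝ => Λ * x - Λ) (Icc 0 1) (Iic 0) := by
    intro x hx
    simp only [mem_Iic]
    nlinarith [hx.2]
  have hℓ : ∀ x : ℝ, HasDerivAt (fun x : ℝ => Λ * x - Λ) Λ x := by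
    intro x
    simpa using ((hasDerivAt_id x).const_mul Λ).sub_const Λ
  -- continuity of the composed WW
  have hWcomp : ContinuousOn (fun x : ℝ => WW b (Λ * x - Λ)) (Icc 0 1) :=
    (WW_contOn hb).comp (by continuity : Continuous fun x : ℝ => Λ * x - Λ).continuousOn hmap
  -- lower bound for WW values
  have hWlow : ∀ x ∈ Icc (0:ℝ) 1, p ≤ WW b (Λ * x - Λ) := by
    intro x hx
    have h1 : -Λ ∈ Icc (-(FF b 0)) 0 := ⟨by linarith, by linarith⟩
    have h2 := hmap x hx
    have h3 : -Λ ≤ Λ * x - Λ := by nlinarith [hx.1]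
    have := (WW_strictMonoOn hb).monotoneOn h1 h2 h3
    rwa [hWneg] at this
  refine ⟨Λ, hΛpos,
    (fun x => Real.sqrt Λ * WW b (Λ * x - Λ)),
    (fun x => Real.sqrt Λ * Λ * DD b (Λ * x - Λ)),
    (fun x => Real.sqrt Λ * Λ ^ 2 * EE b (Λ * x - Λ)),
    ?_, ?_, ?_, ?_, ?_, ?_, ?_, ?_⟩
  · -- continuity of v''
    have he : (fun x => Real.sqrt Λ * Λ ^ 2 * EE b (Λ * x - Λ))
        = fun x => Real.sqrt Λ * Λ ^ 2 *
          (WW b (Λ * x - Λ) / 3 - (WW b (Λ * x - Λ)) ^ 5) := rfl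
    rw [he]
    exact continuousOn_const.mul ((hWcomp.div_const 3).sub (hWcomp.pow 5))
  · -- derivative of v
    intro x hx
    rcases eq_or_lt_of_le hx.2 with heq | hlt
    · subst heq
      have h0 : Λ * (1:ℝ) - Λ = 0 := by ring
      have hW0 : HasDerivWithinAt (WW b) (DD b 0) (Iic 0) (Λ * (1:ℝ) - Λ) := by
        rw [h0]; exact WW_deriv_zero hb
      have hcomp := HasDerivWithinAt.comp (1:ℝ) hW0 ((hℓ 1).hasDerivWithinAt) hmaps
      have := hcomp.const_mul (Real.sqrt Λ)
      show HasDerivWithinAt _ (Real.sqrt Λ * Λ * DD b (Λ * 1 - Λ)) _ _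
      rw [h0]
      refine this.congr_deriv ?_
      ring
    · have ht := hmapo x ⟨hx.1, hlt⟩
      have hW := WW_hasDerivAt hb ht
      have hcomp := hW.comp x (hℓ x)
      have := (hcomp.const_mul (Real.sqrt Λ)).hasDerivWithinAt (s := Icc (0:ℝ) 1)
      show HasDerivWithinAt _ (Real.sqrt Λ * Λ * DD b (Λ * x - Λ)) _ _
      refine this.congr_deriv ?_
      ring
  · -- derivative of v'
    intro x hx
    rcases eq_or_lt_of_le hx.2 with heq | hlt
    · subst heq
      have h0 : Λ * (1:ℝ) - Λ = 0 := by ring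
      have hD0 : HasDerivWithinAt (DD b) (EE b 0) (Iic 0) (Λ * (1:ℝ) - Λ) := by
        rw [h0]; exact DD_deriv_zero hb
      have hcomp := HasDerivWithinAt.comp (1:ℝ) hD0 ((hℓ 1).hasDerivWithinAt) hmaps
      have := hcomp.const_mul (Real.sqrt Λ * Λ)
      show HasDerivWithinAt _ (Real.sqrt Λ * Λ ^ 2 * EE b (Λ * 1 - Λ)) _ _
      rw [h0]
      refine this.congr_deriv ?_
      ring
    · have ht := hmapo x ⟨hx.1, hlt⟩
      have hD := DD_hasDerivAt hb ht
      have hcomp := hD.comp x (hℓ x)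
      have := (hcomp.const_mul (Real.sqrt Λ * Λ)).hasDerivWithinAt (s := Icc (0:ℝ) 1)
      show HasDerivWithinAt _ (Real.sqrt Λ * Λ ^ 2 * EE b (Λ * x - Λ)) _ _
      refine this.congr_deriv ?_
      ring
  · -- positivity
    intro x hx
    have := hWlow x hx
    have : 0 < WW b (Λ * x - Λ) := lt_of_lt_of_le hp0 this
    positivity
  · -- the ODE
    intro x hx
    have hEE : EE b (Λ * x - Λ) = WW b (Λ * x - Λ) / 3 - (WW b (Λ * x - Λ)) ^ 5 := rfl
    beta_reduce
    rw [hEE]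
    set s := WW b (Λ * x - Λ)
    linear_combination (s ^ 5 * Real.sqrt Λ * ((Real.sqrt Λ) ^ 2 + Λ)) * hsqΛ
  · -- v 0
    have h0 : Λ * (0:ℝ) - Λ = -Λ := by ring
    have hzz : Λ * (z / Λ) = z := by field_simp
    show Real.sqrt Λ * WW b (Λ * 0 - Λ) = _
    rw [h0, hWneg, solitonL, hzz, ← hp_def]
  · -- v' 0
    have h0 : Λ * (0:ℝ) - Λ = -Λ := by ring
    have hzz : Λ * (z / Λ) = z := by field_simp
    have hsol : solitonL Λ (z / Λ) = Real.sqrt Λ * p := by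
      rw [solitonL, hzz, ← hp_def]
    have hqqp : qq b p = (2 * p) ^ 2 * (1 - p ^ 4) := by
      rw [qq, hbc]; ring
    have hDval : DD b (-Λ) = 2 * p * Real.sqrt (1 - p ^ 4) / Real.sqrt 3 := by
      rw [DD, hWneg, hqqp, Real.sqrt_mul (by positivity) _,
        Real.sqrt_sq (by positivity)]
    have hpow : (Real.sqrt Λ * p) ^ 4 = Λ ^ 2 * p ^ 4 := by
      calc (Real.sqrt Λ * p) ^ 4 = ((Real.sqrt Λ) ^ 2) ^ 2 * p ^ 4 := by ring
        _ = Λ ^ 2 * p ^ 4 := by rw [hsqΛ]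
    have hsqrt2 : Real.sqrt (Λ ^ 2 - Λ ^ 2 * p ^ 4) = Λ * Real.sqrt (1 - p ^ 4) := by
      rw [show Λ ^ 2 - Λ ^ 2 * p ^ 4 = Λ ^ 2 * (1 - p ^ 4) by ring,
        Real.sqrt_mul (by positivity) _, Real.sqrt_sq hΛpos.le]
    show Real.sqrt Λ * Λ * DD b (Λ * 0 - Λ) = _
    rw [h0, hDval, hsol, hpow, hsqrt2]
    have h3 : Real.sqrt 3 ≠ 0 := by positivity
    field_simp
  · -- v' 1
    have h0 : Λ * (1:ℝ) - Λ = 0 := by ring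
    show Real.sqrt Λ * Λ * DD b (Λ * 1 - Λ) = 0
    rw [h0, DD_zero hb, mul_zero]
end

section
/- The truncated-soliton mass function m(λ) = ∫₀^λ (φ(y) − φ(λ))² dy is continuous and strictly increasing on (0, ∞). -/
open Real MeasureTheory Set Filter

/-- The truncated-soliton mass function `m(λ) = ∫₀^λ (φ(y) − φ(λ))² dy`. -/
noncomputable def truncMass (l : ℝ) : ℝ :=
  ∫ y in Set.Ioo (0:ℝ) l, (soliton y - soliton l) ^ 2

lemma soliton_continuous : Continuous soliton := by
  unfold soliton
  exact (Real.continuous_cosh.comp (by continuity)).rpow_const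
    (fun x => Or.inl (Real.cosh_pos _).ne')

lemma soliton_strict_anti {x y : ℝ} (hx : 0 ≤ x) (hxy : x < y) : soliton y < soliton x := by
  unfold soliton
  have h3 : (0:ℝ) < Real.sqrt 3 := Real.sqrt_pos.mpr (by norm_num)
  have h1 : 2 * x / Real.sqrt 3 < 2 * y / Real.sqrt 3 := by
    apply div_lt_div_of_pos_right _ h3; linarith
  have hx0 : 0 ≤ 2 * x / Real.sqrt 3 := by positivity
  have hcosh : Real.cosh (2 * x / Real.sqrt 3) < Real.cosh (2 * y / Real.sqrt 3) := by
    rw [Real.cosh_lt_cosh, abs_of_nonneg hx0,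
      abs_of_nonneg (le_of_lt (lt_of_le_of_lt hx0 h1))]
    exact h1
  exact Real.rpow_lt_rpow_of_neg (Real.cosh_pos _) hcosh (by norm_num)

lemma integrable_aux (f : ℝ → ℝ) (hf : Continuous f) (a b : ℝ) :
    IntegrableOn f (Set.Ioo a b) volume :=
  (hf.integrableOn_Ioc).mono_set Set.Ioo_subset_Ioc_self

lemma truncMass_eq {l : ℝ} (hl : 0 < l) :
    truncMass l = (∫ y in (0:ℝ)..l, (soliton y)^2)
      - 2 * soliton l * (∫ y in (0:ℝ)..l, soliton y) + l * (soliton l)^2 := by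
  have hsq : Continuous fun y => (soliton y)^2 := soliton_continuous.pow 2
  have h1 : IntegrableOn (fun y => (soliton y)^2) (Set.Ioo 0 l) volume :=
    integrable_aux _ hsq 0 l
  have h2 : IntegrableOn (fun y => 2 * soliton l * soliton y) (Set.Ioo 0 l) volume :=
    integrable_aux _ (continuous_const.mul soliton_continuous) 0 l
  have h3 : IntegrableOn (fun _ : ℝ => (soliton l)^2) (Set.Ioo 0 l) volume :=
    integrable_aux _ continuous_const 0 l
  have key : truncMass l = (∫ y in Set.Ioo (0:ℝ) l, (soliton y)^2)
      - (∫ y in Set.Ioo (0:ℝ) l, 2 * soliton l * soliton y)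
      + (∫ _ in Set.Ioo (0:ℝ) l, (soliton l)^2) := by
    unfold truncMass
    have he : ∀ y : ℝ, (soliton y - soliton l)^2
        = (soliton y)^2 - 2 * soliton l * soliton y + (soliton l)^2 := fun y => by ring
    simp_rw [he]
    have h12 : IntegrableOn (fun y => (soliton y)^2 - 2 * soliton l * soliton y)
        (Set.Ioo 0 l) volume := h1.sub h2
    rw [integral_add h12 h3, integral_sub h1 h2]
  rw [key, setIntegral_const, Real.volume_real_Ioo_of_le hl.le,
    intervalIntegral.integral_of_le hl.le,
    intervalIntegral.integral_of_le hl.le,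
    ← MeasureTheory.integral_Ioc_eq_integral_Ioo,
    ← MeasureTheory.integral_Ioc_eq_integral_Ioo,
    MeasureTheory.integral_const_mul, smul_eq_mul]
  ring

theorem stmt_10 :
    ContinuousOn truncMass (Set.Ioi 0) ∧ StrictMonoOn truncMass (Set.Ioi 0) := by
  constructor
  · have hsq : Continuous fun y => (soliton y)^2 := soliton_continuous.pow 2
    have hg : Continuous fun l => (∫ y in (0:ℝ)..l, (soliton y)^2)
        - 2 * soliton l * (∫ y in (0:ℝ)..l, soliton y) + l * (soliton l)^2 := by
      apply Continuous.add
      · apply Continuous.sub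
        · exact intervalIntegral.continuous_primitive
            (fun a b => hsq.intervalIntegrable a b) 0
        · exact (continuous_const.mul soliton_continuous).mul
            (intervalIntegral.continuous_primitive
              (fun a b => soliton_continuous.intervalIntegrable a b) 0)
      · exact continuous_id.mul (soliton_continuous.pow 2)
    exact ContinuousOn.congr hg.continuousOn (fun l hl => truncMass_eq hl)
  · intro a ha b hb hab
    have ha' : (0:ℝ) < a := ha
    have hb' : (0:ℝ) < b := hb
    have hba : soliton b < soliton a := soliton_strict_anti ha'.le hab
    -- step 1: ∫_{Ioo 0 a} (φ - φa)² < ∫_{Ioo 0 a} (φ - φb)²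
    have step1 : truncMass a < ∫ y in Set.Ioo (0:ℝ) a, (soliton y - soliton b)^2 := by
      have hd : (0:ℝ) < ∫ y in (0:ℝ)..a,
          ((soliton y - soliton b)^2 - (soliton y - soliton a)^2) := by
        apply intervalIntegral.intervalIntegral_pos_of_pos_on
        · exact Continuous.intervalIntegrable
            (((soliton_continuous.sub continuous_const).pow 2).sub
              ((soliton_continuous.sub continuous_const).pow 2)) 0 a
        · intro x hx
          have h1 : soliton a < soliton x := soliton_strict_anti hx.1.le hx.2
          nlinarith
        · exact ha'
      rw [intervalIntegral.integral_of_le ha'.le,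
        MeasureTheory.integral_Ioc_eq_integral_Ioo,
        integral_sub
          (integrable_aux (fun y => (soliton y - soliton b)^2) ((soliton_continuous.sub continuous_const).pow 2) 0 a)
          (integrable_aux (fun y => (soliton y - soliton a)^2) ((soliton_continuous.sub continuous_const).pow 2) 0 a)] at hd
      unfold truncMass
      linarith
    -- step 2: monotonicity in domain
    have step2 : (∫ y in Set.Ioo (0:ℝ) a, (soliton y - soliton b)^2)
        ≤ ∫ y in Set.Ioo (0:ℝ) b, (soliton y - soliton b)^2 := by
      apply setIntegral_mono_set
        (integrable_aux _ ((soliton_continuous.sub continuous_const).pow 2) 0 b)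
      · exact Filter.Eventually.of_forall (fun y => sq_nonneg _)
      · exact HasSubset.Subset.eventuallyLE (Set.Ioo_subset_Ioo_right hab.le)
    calc truncMass a < _ := step1
      _ ≤ truncMass b := step2
end

section
/- For every μ ∈ (0, √3·π/4) there exists a unique λ > 0 such that ∫₀^λ (φ(y) − φ(λ))² dy = μ. -/
open Real MeasureTheory Set Filter Topology

namespace SolitonAux

lemma soliton_pos (x : ℝ) : 0 < soliton x := Real.rpow_pos_of_pos (Real.cosh_pos _) _

lemma soliton_cont : Continuous soliton := by
  apply Continuous.rpow_const
  · fun_prop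
  · exact fun x => Or.inl (ne_of_gt (Real.cosh_pos _))

lemma sqrt3_pos : (0:ℝ) < Real.sqrt 3 := Real.sqrt_pos.2 (by norm_num)

lemma soliton_sq (x : ℝ) : soliton x ^ 2 = (Real.cosh (2 * x / Real.sqrt 3))⁻¹ := by
  unfold soliton
  rw [← Real.rpow_natCast ((Real.cosh (2 * x / Real.sqrt 3)) ^ (-(1/2) : ℝ)) 2,
    ← Real.rpow_mul (Real.cosh_pos _).le]
  norm_num
  rw [Real.rpow_neg_one]

lemma soliton_anti {a b : ℝ} (ha : 0 ≤ a) (hab : a < b) : soliton b < soliton a := by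
  unfold soliton
  apply Real.rpow_lt_rpow_of_neg (Real.cosh_pos _) _ (by norm_num)
  apply Real.cosh_strictMonoOn (mem_Ici.2 (div_nonneg (by linarith) sqrt3_pos.le)) (mem_Ici.2 (div_nonneg (by linarith) sqrt3_pos.le))
  have h3 := sqrt3_pos
  gcongr

lemma soliton_anti_le {a b : ℝ} (ha : 0 ≤ a) (hab : a ≤ b) : soliton b ≤ soliton a := by
  rcases eq_or_lt_of_le hab with rfl | h
  · exact le_refl _
  · exact (soliton_anti ha h).le


noncomputable def P (l : ℝ) : ℝ := Real.sqrt 3 / 2 * Real.arctan (Real.sinh (2 * l / Real.sqrt 3))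

lemma hasDerivAt_P (l : ℝ) : HasDerivAt P (soliton l ^ 2) l := by
  have h1 : HasDerivAt (fun x : ℝ => 2 * x / Real.sqrt 3) (2 / Real.sqrt 3) l := by
    simpa using ((hasDerivAt_id l).const_mul (2:ℝ)).div_const (Real.sqrt 3)
  have h2 := h1.sinh
  have h3 := h2.arctan
  have h4 := h3.const_mul (Real.sqrt 3 / 2)
  apply h4.congr_deriv
  symm
  rw [soliton_sq]
  rw [show (1 + Real.sinh (2 * l / Real.sqrt 3) ^ 2) = Real.cosh (2 * l / Real.sqrt 3) ^ 2 from
    (Real.cosh_sq' _).symm]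
  have hc := Real.cosh_pos (2 * l / Real.sqrt 3)
  field_simp

lemma P_zero : P 0 = 0 := by simp [P]

noncomputable def A (l : ℝ) : ℝ := ∫ y in (0:ℝ)..l, soliton y ^ 2
noncomputable def B (l : ℝ) : ℝ := ∫ y in (0:ℝ)..l, soliton y
noncomputable def g (l : ℝ) : ℝ := ∫ y in (0:ℝ)..l, (soliton y - soliton l) ^ 2

lemma A_eq (l : ℝ) : A l = P l := by
  have := intervalIntegral.integral_eq_sub_of_hasDerivAt (f := P)
    (fun x _ => hasDerivAt_P x) (((soliton_cont.pow 2)).intervalIntegrable 0 l)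
  rw [A, this, P_zero, sub_zero]

lemma contA : Continuous A :=
  intervalIntegral.continuous_primitive (fun a b => (soliton_cont.pow 2).intervalIntegrable a b) 0

lemma contB : Continuous B :=
  intervalIntegral.continuous_primitive (fun a b => soliton_cont.intervalIntegrable a b) 0

lemma expand (l : ℝ) : g l = A l - 2 * soliton l * B l + l * soliton l ^ 2 := by
  have h1 : IntervalIntegrable (fun y => soliton y ^ 2) volume 0 l :=
    (soliton_cont.pow 2).intervalIntegrable 0 l
  have h2 : IntervalIntegrable (fun y => 2 * soliton l * soliton y) volume 0 l :=
    (continuous_const.mul soliton_cont).intervalIntegrable 0 l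
  have key : ∀ y : ℝ, (soliton y - soliton l) ^ 2
      = soliton y ^ 2 - 2 * soliton l * soliton y + soliton l ^ 2 := fun y => by ring
  rw [g]
  simp_rw [key]
  rw [intervalIntegral.integral_add (h1.sub h2) (intervalIntegrable_const),
    intervalIntegral.integral_sub h1 h2, intervalIntegral.integral_const_mul,
    intervalIntegral.integral_const]
  rw [A, B]
  simp [smul_eq_mul]

lemma contg : Continuous g := by
  have : g = fun l => A l - 2 * soliton l * B l + l * soliton l ^ 2 := funext expand
  rw [this]
  exact (contA.sub ((continuous_const.mul soliton_cont).mul contB)).add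
    (continuous_id.mul (soliton_cont.pow 2))

lemma g_zero : g 0 = 0 := intervalIntegral.integral_same

lemma g_mono {a b : ℝ} (ha : 0 < a) (hab : a < b) : g a < g b := by
  have hfa : Continuous (fun y => (soliton y - soliton a) ^ 2) :=
    (soliton_cont.sub continuous_const).pow 2
  have hfb : Continuous (fun y => (soliton y - soliton b) ^ 2) :=
    (soliton_cont.sub continuous_const).pow 2
  have hba : soliton b < soliton a := soliton_anti ha.le hab
  have h1 : g a < ∫ y in (0:ℝ)..a, (soliton y - soliton b) ^ 2 := by
    apply intervalIntegral.integral_lt_integral_of_continuousOn_of_le_of_exists_lt ha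
      hfa.continuousOn hfb.continuousOn
    · intro y hy
      have h1 : soliton a ≤ soliton y := soliton_anti_le hy.1.le hy.2
      nlinarith
    · refine ⟨a, ⟨ha.le, le_refl a⟩, ?_⟩
      have : (soliton a - soliton a) ^ 2 = 0 := by ring
      rw [this]
      nlinarith
  have h2 : (∫ y in (0:ℝ)..a, (soliton y - soliton b) ^ 2) ≤ g b := by
    rw [g, ← intervalIntegral.integral_add_adjacent_intervals
      (hfb.intervalIntegrable 0 a) (hfb.intervalIntegrable a b)]
    have : (0:ℝ) ≤ ∫ y in a..b, (soliton y - soliton b) ^ 2 :=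
      intervalIntegral.integral_nonneg hab.le (fun y _ => sq_nonneg _)
    linarith
  linarith

lemma soliton_le_exp {y : ℝ} (hy : 0 ≤ y) :
    soliton y ≤ Real.sqrt 2 * Real.exp (-(y / Real.sqrt 3)) := by
  have hppos := soliton_pos y
  have hrpos : (0:ℝ) < Real.sqrt 2 * Real.exp (-(y / Real.sqrt 3)) := by positivity
  have hsq : soliton y ^ 2 ≤ (Real.sqrt 2 * Real.exp (-(y / Real.sqrt 3))) ^ 2 := by
    rw [soliton_sq, mul_pow, Real.sq_sqrt (by norm_num : (0:ℝ) ≤ 2), ← Real.exp_nat_mul]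
    have hrw : ((2:ℕ) : ℝ) * -(y / Real.sqrt 3) = -(2 * y / Real.sqrt 3) := by push_cast; ring
    rw [hrw, Real.exp_neg]
    have hc : Real.exp (2 * y / Real.sqrt 3) / 2 ≤ Real.cosh (2 * y / Real.sqrt 3) := by
      rw [Real.cosh_eq]
      have := Real.exp_pos (-(2 * y / Real.sqrt 3))
      linarith
    have hepos : (0:ℝ) < Real.exp (2 * y / Real.sqrt 3) / 2 := by positivity
    calc (Real.cosh (2 * y / Real.sqrt 3))⁻¹ ≤ (Real.exp (2 * y / Real.sqrt 3) / 2)⁻¹ := by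
          exact inv_anti₀ hepos hc
      _ = 2 * (Real.exp (2 * y / Real.sqrt 3))⁻¹ := by field_simp
  nlinarith

lemma B_le {l : ℝ} (hl : 0 ≤ l) : B l ≤ Real.sqrt 6 := by
  have h6 : Real.sqrt 6 = Real.sqrt 2 * Real.sqrt 3 := by
    rw [← Real.sqrt_mul (by norm_num : (0:ℝ) ≤ 2)]; norm_num
  have hD : ∀ x : ℝ, HasDerivAt (fun t => -(Real.sqrt 6 * Real.exp (-(t / Real.sqrt 3))))
      (Real.sqrt 2 * Real.exp (-(x / Real.sqrt 3))) x := by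
    intro x
    have h1 : HasDerivAt (fun t : ℝ => -(t / Real.sqrt 3)) (-(1 / Real.sqrt 3)) x := by
      exact ((hasDerivAt_id' x).div_const (Real.sqrt 3)).neg
    have h2 := ((h1.exp.const_mul (Real.sqrt 6)).neg)
    apply h2.congr_deriv
    rw [h6]
    have h3 := sqrt3_pos
    field_simp
  have key : B l ≤ ∫ y in (0:ℝ)..l, Real.sqrt 2 * Real.exp (-(y / Real.sqrt 3)) := by
    rw [B]
    apply intervalIntegral.integral_mono_on hl (soliton_cont.intervalIntegrable 0 l)
      ((continuous_const.mul (Real.continuous_exp.comp (by fun_prop))).intervalIntegrable 0 l)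
    exact fun y hy => soliton_le_exp hy.1
  rw [intervalIntegral.integral_eq_sub_of_hasDerivAt (fun x _ => hD x)
    ((continuous_const.mul (Real.continuous_exp.comp (by fun_prop))).intervalIntegrable 0 l)] at key
  have he1 : (0:ℝ) < Real.exp (-(l / Real.sqrt 3)) := Real.exp_pos _
  have he2 : Real.exp (-(0 / Real.sqrt 3)) = 1 := by norm_num
  have h6pos : (0:ℝ) ≤ Real.sqrt 6 := Real.sqrt_nonneg _
  rw [he2] at key
  nlinarith

lemma soliton_tendsto : Tendsto soliton atTop (𝓝 0) := by
  have hlin : Tendsto (fun l : ℝ => 2 * l / Real.sqrt 3) atTop atTop :=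
    (tendsto_id.const_mul_atTop (by norm_num : (0:ℝ) < 2)).atTop_div_const sqrt3_pos
  have hcosh : Tendsto Real.cosh atTop atTop := by
    apply tendsto_atTop_mono (fun x => ?_) (Real.tendsto_exp_atTop.atTop_div_const two_pos)
    rw [Real.cosh_eq]
    have := (Real.exp_pos (-x)).le
    linarith
  have := (tendsto_rpow_neg_atTop (by norm_num : (0:ℝ) < 1/2)).comp (hcosh.comp hlin)
  exact this.congr (fun x => by norm_num [Function.comp, soliton])

lemma P_tendsto : Tendsto P atTop (𝓝 (Real.sqrt 3 * Real.pi / 4)) := by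
  have hlin : Tendsto (fun l : ℝ => 2 * l / Real.sqrt 3) atTop atTop :=
    (tendsto_id.const_mul_atTop (by norm_num : (0:ℝ) < 2)).atTop_div_const sqrt3_pos
  have hsinh : Tendsto Real.sinh atTop atTop := by
    have hb : Tendsto (fun x : ℝ => Real.exp x / 2 + -(1/2)) atTop atTop :=
      tendsto_atTop_add_const_right atTop (-(1/2))
        (Real.tendsto_exp_atTop.atTop_div_const two_pos)
    apply tendsto_atTop_mono' _ ?_ hb
    filter_upwards [eventually_ge_atTop (0:ℝ)] with x hx
    rw [Real.sinh_eq]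
    have h1 : Real.exp (-x) ≤ 1 := Real.exp_le_one_iff.2 (by linarith)
    linarith
  have h := ((Real.tendsto_arctan_atTop.mono_right nhdsWithin_le_nhds).comp
    (hsinh.comp hlin)).const_mul (Real.sqrt 3 / 2)
  have heq : Real.sqrt 3 / 2 * (Real.pi / 2) = Real.sqrt 3 * Real.pi / 4 := by ring
  rw [heq] at h
  exact h



lemma conv {l : ℝ} (hl : 0 < l) :
    (∫ y in Set.Ioo (0:ℝ) l, (soliton y - soliton l) ^ 2) = g l := by
  rw [g, intervalIntegral.integral_of_le hl.le, MeasureTheory.integral_Ioc_eq_integral_Ioo]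

end SolitonAux

open SolitonAux

theorem stmt_12 (μ : ℝ) (hμ : μ ∈ Set.Ioo 0 (Real.sqrt 3 * Real.pi / 4)) :
    ∃! l : ℝ, 0 < l ∧ ∫ y in Set.Ioo (0:ℝ) l, (soliton y - soliton l) ^ 2 = μ := by
  obtain ⟨hμ0, hμ1⟩ := hμ
  have hlow : ∀ l : ℝ, 0 ≤ l → A l - 2 * soliton l * Real.sqrt 6 ≤ g l := by
    intro l hl
    rw [expand]
    have h1 := B_le hl
    have h2 := soliton_pos l
    nlinarith [mul_nonneg hl (sq_nonneg (soliton l))]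
  have htend : Tendsto (fun l => A l - 2 * soliton l * Real.sqrt 6) atTop
      (𝓝 (Real.sqrt 3 * Real.pi / 4)) := by
    have h1 : Tendsto A atTop (𝓝 (Real.sqrt 3 * Real.pi / 4)) := (funext A_eq) ▸ P_tendsto
    have h2 : Tendsto (fun l => 2 * soliton l * Real.sqrt 6) atTop (𝓝 0) := by
      have := (soliton_tendsto.const_mul (2:ℝ)).mul_const (Real.sqrt 6)
      simpa using this
    simpa using h1.sub h2
  obtain ⟨T, hT⟩ := ((htend.eventually_const_lt hμ1).and (eventually_gt_atTop 0)).exists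
  have hTpos : (0:ℝ) < T := hT.2
  have hgT : μ < g T := lt_of_lt_of_le hT.1 (hlow T hTpos.le)
  have hivt := intermediate_value_Ioo hTpos.le contg.continuousOn
  rw [g_zero] at hivt
  obtain ⟨l, hlmem, hgl⟩ := hivt ⟨hμ0, hgT⟩
  refine ⟨l, ⟨hlmem.1, by rw [conv hlmem.1]; exact hgl⟩, ?_⟩
  rintro l' ⟨hl'0, hl'⟩
  rw [conv hl'0] at hl'
  rcases lt_trichotomy l' l with h | h | h
  · have := g_mono hl'0 h
    rw [hl', hgl] at this
    exact absurd this (lt_irrefl μ)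
  · exact h
  · have := g_mono hlmem.1 h
    rw [hl', hgl] at this
    exact absurd this (lt_irrefl μ)
end

section
/- Sharp Gagliardo–Nirenberg inequality on the real line: if u : ℝ → ℝ is differentiable with u and u' square-integrable on ℝ, then ∫_ℝ u⁶ ≤ (4/π²)·(∫_ℝ u²)²·(∫_ℝ (u')²). (The constant 4/π² equals 3/μ_ℝ² with μ_ℝ = √3·π/2 the critical mass of the line.) -/
open Real MeasureTheory Set Filter Topology

section GN

variable {u : ℝ → ℝ}

lemma meas_u' (u : ℝ → ℝ) : AEStronglyMeasurable (deriv u) volume :=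
  (measurable_deriv u).aestronglyMeasurable

lemma int_uu' (hu : Differentiable ℝ u) (hu2 : Integrable (fun x => (u x) ^ 2))
    (hu'2 : Integrable (fun x => (deriv u x) ^ 2)) :
    Integrable (fun x => u x * deriv u x) := by
  refine Integrable.mono' ((hu2.add hu'2).div_const 2) ?_ ?_
  · exact (hu.continuous.aestronglyMeasurable.mul (meas_u' u))
  · refine Eventually.of_forall fun x => ?_
    have h : |u x * deriv u x| ≤ (u x ^ 2 + deriv u x ^ 2) / 2 := by
      rw [abs_mul]
      nlinarith [sq_nonneg (|u x| - |deriv u x|), sq_abs (u x), sq_abs (deriv u x)]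
    calc ‖u x * deriv u x‖ = |u x * deriv u x| := rfl
      _ ≤ _ := h

lemma hasDerivAt_sq (hu : Differentiable ℝ u) (x : ℝ) :
    HasDerivAt (fun t => u t ^ 2) (2 * (u x * deriv u x)) x := by
  have := ((hu x).hasDerivAt).fun_pow 2
  exact this.congr_deriv (by norm_num; ring)

lemma usq_sub_sq (hu : Differentiable ℝ u) (hu2 : Integrable (fun x => (u x) ^ 2))
    (hu'2 : Integrable (fun x => (deriv u x) ^ 2)) (a b : ℝ) :
    u b ^ 2 - u a ^ 2 = ∫ x in a..b, 2 * (u x * deriv u x) := by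
  rw [intervalIntegral.integral_eq_sub_of_hasDerivAt
    (fun x _ => hasDerivAt_sq hu x)
    (((int_uu' hu hu2 hu'2).const_mul 2).intervalIntegrable)]


lemma tendsto_sq_atTop (hu : Differentiable ℝ u) (hu2 : Integrable (fun x => (u x) ^ 2))
    (hu'2 : Integrable (fun x => (deriv u x) ^ 2)) :
    Tendsto (fun y => u y ^ 2) atTop (𝓝 0) := by
  have hint := (int_uu' hu hu2 hu'2).const_mul 2
  have h1 : Tendsto (fun y => ∫ x in (0:ℝ)..y, 2 * (u x * deriv u x)) atTop
      (𝓝 (∫ x in Ioi (0:ℝ), 2 * (u x * deriv u x))) :=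
    intervalIntegral_tendsto_integral_Ioi 0 hint.integrableOn tendsto_id
  have h2 : Tendsto (fun y => u y ^ 2) atTop
      (𝓝 (u 0 ^ 2 + ∫ x in Ioi (0:ℝ), 2 * (u x * deriv u x))) := by
    have : ∀ y, u y ^ 2 = u 0 ^ 2 + ∫ x in (0:ℝ)..y, 2 * (u x * deriv u x) := by
      intro y
      have := usq_sub_sq hu hu2 hu'2 0 y
      linarith
    exact (tendsto_const_nhds.add h1).congr fun y => (this y).symm
  -- the limit L must be 0
  set L := u 0 ^ 2 + ∫ x in Ioi (0:ℝ), 2 * (u x * deriv u x) with hL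
  have hL0 : L = 0 := by
    by_contra hne
    have hLnonneg : 0 ≤ L := le_of_tendsto_of_tendsto' tendsto_const_nhds h2
      (fun y => sq_nonneg _)
    have hLpos : 0 < L := lt_of_le_of_ne hLnonneg (Ne.symm hne)
    obtain ⟨N, hN⟩ := (h2.eventually (eventually_gt_nhds (by linarith : L / 2 < L))).exists_forall_of_atTop
    -- ∫ over [N, R] of u^2 ≥ (L/2)(R - N), contradiction for large R
    have key : ∀ R, N ≤ R → (L / 2) * (R - N) ≤ ∫ x, u x ^ 2 := by
      intro R hR
      have h3 : (L / 2) * (R - N) ≤ ∫ x in Ioc N R, u x ^ 2 := by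
        have := MeasureTheory.setIntegral_ge_of_const_le (measurableSet_Ioc)
          (by simp : volume (Ioc N R) ≠ ⊤) (fun x hx => (hN x (le_of_lt hx.1)).le)
          (hu2.integrableOn)
        rw [measureReal_def, Real.volume_Ioc, smul_eq_mul] at this
        rw [ENNReal.toReal_ofReal (by linarith)] at this
        linarith [this]
      have h4 : ∫ x in Ioc N R, u x ^ 2 ≤ ∫ x, u x ^ 2 := by
        refine setIntegral_le_integral hu2 (Eventually.of_forall fun x => sq_nonneg _)
      linarith
    have hM0 : 0 ≤ ∫ x, u x ^ 2 := integral_nonneg fun x => sq_nonneg _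
    have hdnn : 0 ≤ (2 * (∫ x, u x ^ 2) + 1) / L := div_nonneg (by linarith) hLpos.le
    have := key (N + (2 * (∫ x, u x ^ 2) + 1) / L + 1) (by linarith)
    have hd : L * ((2 * (∫ x, u x ^ 2) + 1) / L) = 2 * (∫ x, u x ^ 2) + 1 :=
      mul_div_cancel₀ _ (ne_of_gt hLpos)
    nlinarith [this, hd]
  rw [hL0] at h2
  exact h2

lemma tendsto_sq_atBot (hu : Differentiable ℝ u) (hu2 : Integrable (fun x => (u x) ^ 2))
    (hu'2 : Integrable (fun x => (deriv u x) ^ 2)) :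
    Tendsto (fun y => u y ^ 2) atBot (𝓝 0) := by
  have hint := (int_uu' hu hu2 hu'2).const_mul 2
  have h1 : Tendsto (fun y => ∫ x in y..(0:ℝ), 2 * (u x * deriv u x)) atBot
      (𝓝 (∫ x in Iic (0:ℝ), 2 * (u x * deriv u x))) :=
    intervalIntegral_tendsto_integral_Iic 0 hint.integrableOn tendsto_id
  have h2 : Tendsto (fun y => u y ^ 2) atBot
      (𝓝 (u 0 ^ 2 - ∫ x in Iic (0:ℝ), 2 * (u x * deriv u x))) := by
    have : ∀ y, u y ^ 2 = u 0 ^ 2 - ∫ x in y..(0:ℝ), 2 * (u x * deriv u x) := by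
      intro y
      have := usq_sub_sq hu hu2 hu'2 y 0
      linarith
    exact (tendsto_const_nhds.sub h1).congr fun y => (this y).symm
  set L := u 0 ^ 2 - ∫ x in Iic (0:ℝ), 2 * (u x * deriv u x) with hL
  have hL0 : L = 0 := by
    by_contra hne
    have hLnonneg : 0 ≤ L := le_of_tendsto_of_tendsto' tendsto_const_nhds h2
      (fun y => sq_nonneg _)
    have hLpos : 0 < L := lt_of_le_of_ne hLnonneg (Ne.symm hne)
    obtain ⟨N, hN⟩ := (h2.eventually (eventually_gt_nhds (by linarith : L / 2 < L))).exists_forall_of_atBot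
    have key : ∀ R, R ≤ N → (L / 2) * (N - R) ≤ ∫ x, u x ^ 2 := by
      intro R hR
      have h3 : (L / 2) * (N - R) ≤ ∫ x in Ioc R N, u x ^ 2 := by
        have := MeasureTheory.setIntegral_ge_of_const_le (measurableSet_Ioc)
          (by simp : volume (Ioc R N) ≠ ⊤) (fun x hx => (hN x hx.2).le)
          (hu2.integrableOn)
        rw [measureReal_def, Real.volume_Ioc, smul_eq_mul] at this
        rw [ENNReal.toReal_ofReal (by linarith)] at this
        linarith [this]
      have h4 : ∫ x in Ioc R N, u x ^ 2 ≤ ∫ x, u x ^ 2 := by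
        refine setIntegral_le_integral hu2 (Eventually.of_forall fun x => sq_nonneg _)
      linarith
    have hM0 : 0 ≤ ∫ x, u x ^ 2 := integral_nonneg fun x => sq_nonneg _
    have hdnn : 0 ≤ (2 * (∫ x, u x ^ 2) + 1) / L := div_nonneg (by linarith) hLpos.le
    have := key (N - (2 * (∫ x, u x ^ 2) + 1) / L - 1) (by linarith)
    have hd : L * ((2 * (∫ x, u x ^ 2) + 1) / L) = 2 * (∫ x, u x ^ 2) + 1 :=
      mul_div_cancel₀ _ (ne_of_gt hLpos)
    nlinarith [this, hd]
  rw [hL0] at h2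
  exact h2

lemma sq_eq_left (hu : Differentiable ℝ u) (hu2 : Integrable (fun x => (u x) ^ 2))
    (hu'2 : Integrable (fun x => (deriv u x) ^ 2)) (b : ℝ) :
    u b ^ 2 = ∫ x in Iio b, 2 * (u x * deriv u x) := by
  have hint := (int_uu' hu hu2 hu'2).const_mul 2
  have h1 : Tendsto (fun y => ∫ x in y..b, 2 * (u x * deriv u x)) atBot
      (𝓝 (∫ x in Iic b, 2 * (u x * deriv u x))) :=
    intervalIntegral_tendsto_integral_Iic b hint.integrableOn tendsto_id
  have h2 : Tendsto (fun y => u b ^ 2 - u y ^ 2) atBot (𝓝 (u b ^ 2 - 0)) :=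
    tendsto_const_nhds.sub (tendsto_sq_atBot hu hu2 hu'2)
  have h3 : ∀ y, u b ^ 2 - u y ^ 2 = ∫ x in y..b, 2 * (u x * deriv u x) := fun y =>
    usq_sub_sq hu hu2 hu'2 y b
  have h4 := h2.congr h3
  have h5 : u b ^ 2 - 0 = ∫ x in Iic b, 2 * (u x * deriv u x) :=
    tendsto_nhds_unique h4 h1
  rw [← integral_Iic_eq_integral_Iio]
  linarith

lemma sq_eq_right (hu : Differentiable ℝ u) (hu2 : Integrable (fun x => (u x) ^ 2))
    (hu'2 : Integrable (fun x => (deriv u x) ^ 2)) (b : ℝ) :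
    u b ^ 2 = - ∫ x in Ioi b, 2 * (u x * deriv u x) := by
  have hint := (int_uu' hu hu2 hu'2).const_mul 2
  have h1 : Tendsto (fun y => ∫ x in b..y, 2 * (u x * deriv u x)) atTop
      (𝓝 (∫ x in Ioi b, 2 * (u x * deriv u x))) :=
    intervalIntegral_tendsto_integral_Ioi b hint.integrableOn tendsto_id
  have h2 : Tendsto (fun y => u y ^ 2 - u b ^ 2) atTop (𝓝 (0 - u b ^ 2)) :=
    (tendsto_sq_atTop hu hu2 hu'2).sub tendsto_const_nhds
  have h3 : ∀ y, u y ^ 2 - u b ^ 2 = ∫ x in b..y, 2 * (u x * deriv u x) := fun y =>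
    usq_sub_sq hu hu2 hu'2 b y
  have h4 := h2.congr h3
  have h5 : 0 - u b ^ 2 = ∫ x in Ioi b, 2 * (u x * deriv u x) :=
    tendsto_nhds_unique h4 h1
  linarith

/-- Pointwise Cauchy–Schwarz-type bound from a one-parameter family. -/
lemma quad_of_family {A P Q : ℝ} (hP : 0 ≤ P) (hQ : 0 ≤ Q) (hA : 0 ≤ A)
    (h : ∀ t : ℝ, 0 < t → A ≤ t * P + Q / t) : A ^ 2 ≤ 4 * P * Q := by
  rcases eq_or_lt_of_le hP with hP0 | hPpos
  · -- P = 0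
    rcases eq_or_lt_of_le hA with hA0 | hApos
    · nlinarith
    · exfalso
      have ht := h ((Q + 1) / A) (div_pos (by linarith) hApos)
      have h1 : Q / ((Q + 1) / A) = Q * A / (Q + 1) := by
        field_simp
      rw [← hP0] at ht
      rw [h1] at ht
      have h2 : Q * A / (Q + 1) < A := by
        rw [div_lt_iff₀ (by linarith)]
        nlinarith
      linarith
  · rcases eq_or_lt_of_le hA with hA0 | hApos
    · nlinarith
    · have ht := h (A / (2 * P)) (div_pos hApos (by linarith))
      have h1 : (A / (2 * P)) * P = A / 2 := by field_simp
      have h2 : Q / (A / (2 * P)) = 2 * P * Q / A := by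
        field_simp
      rw [h1, h2] at ht
      have h3 : A - A / 2 ≤ 2 * P * Q / A := by linarith
      have h4 : (A - A / 2) * A ≤ 2 * P * Q := by
        have := mul_le_mul_of_nonneg_right h3 hApos.le
        rwa [div_mul_cancel₀ _ (ne_of_gt hApos)] at this
      nlinarith

lemma quad_left (hu : Differentiable ℝ u) (hu2 : Integrable (fun x => (u x) ^ 2))
    (hu'2 : Integrable (fun x => (deriv u x) ^ 2)) (b : ℝ) :
    (u b ^ 2) ^ 2 ≤ 4 * (∫ x in Iio b, u x ^ 2) * (∫ x in Iio b, deriv u x ^ 2) := by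
  set P := ∫ x in Iio b, u x ^ 2 with hP
  set Q := ∫ x in Iio b, deriv u x ^ 2 with hQ
  refine quad_of_family (setIntegral_nonneg measurableSet_Iio fun x _ => sq_nonneg _)
    (setIntegral_nonneg measurableSet_Iio fun x _ => sq_nonneg _) (sq_nonneg _) ?_
  intro t ht
  rw [sq_eq_left hu hu2 hu'2 b]
  have hbound : ∀ x, 2 * (u x * deriv u x) ≤ t * u x ^ 2 + deriv u x ^ 2 / t := by
    intro x
    rw [← sub_nonneg]
    have hexp : t * u x ^ 2 + deriv u x ^ 2 / t - 2 * (u x * deriv u x)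
        = (t * u x - deriv u x) ^ 2 / t := by
      field_simp; ring
    rw [hexp]; positivity
  calc ∫ x in Iio b, 2 * (u x * deriv u x)
      ≤ ∫ x in Iio b, (t * u x ^ 2 + deriv u x ^ 2 / t) := by
        refine setIntegral_mono_on ?_ ?_ measurableSet_Iio fun x _ => hbound x
        · exact ((int_uu' hu hu2 hu'2).const_mul 2).integrableOn
        · exact ((hu2.const_mul t).add (hu'2.div_const t)).integrableOn
    _ = t * P + Q / t := by
        rw [integral_add ((hu2.const_mul t).integrableOn) ((hu'2.div_const t).integrableOn)]
        rw [integral_const_mul, integral_div]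

lemma quad_right (hu : Differentiable ℝ u) (hu2 : Integrable (fun x => (u x) ^ 2))
    (hu'2 : Integrable (fun x => (deriv u x) ^ 2)) (b : ℝ) :
    (u b ^ 2) ^ 2 ≤ 4 * (∫ x in Ioi b, u x ^ 2) * (∫ x in Ioi b, deriv u x ^ 2) := by
  set P := ∫ x in Ioi b, u x ^ 2 with hP
  set Q := ∫ x in Ioi b, deriv u x ^ 2 with hQ
  refine quad_of_family (setIntegral_nonneg measurableSet_Ioi fun x _ => sq_nonneg _)
    (setIntegral_nonneg measurableSet_Ioi fun x _ => sq_nonneg _) (sq_nonneg _) ?_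
  intro t ht
  rw [sq_eq_right hu hu2 hu'2 b]
  have hbound : ∀ x, -(2 * (u x * deriv u x)) ≤ t * u x ^ 2 + deriv u x ^ 2 / t := by
    intro x
    rw [← sub_nonneg]
    have hexp : t * u x ^ 2 + deriv u x ^ 2 / t - -(2 * (u x * deriv u x))
        = (t * u x + deriv u x) ^ 2 / t := by
      field_simp; ring
    rw [hexp]; positivity
  calc -(∫ x in Ioi b, 2 * (u x * deriv u x))
      = ∫ x in Ioi b, -(2 * (u x * deriv u x)) := by rw [integral_neg]
    _ ≤ ∫ x in Ioi b, (t * u x ^ 2 + deriv u x ^ 2 / t) := by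
        refine setIntegral_mono_on ?_ ?_ measurableSet_Ioi fun x _ => hbound x
        · exact ((int_uu' hu hu2 hu'2).const_mul 2).neg.integrableOn
        · exact ((hu2.const_mul t).add (hu'2.div_const t)).integrableOn
    _ = t * P + Q / t := by
        rw [integral_add ((hu2.const_mul t).integrableOn) ((hu'2.div_const t).integrableOn)]
        rw [integral_const_mul, integral_div]

lemma global_quartic (hu : Differentiable ℝ u) (hu2 : Integrable (fun x => (u x) ^ 2))
    (hu'2 : Integrable (fun x => (deriv u x) ^ 2)) (b : ℝ) :
    (u b ^ 2) ^ 2 ≤ 4 * (∫ x, u x ^ 2) * (∫ x, deriv u x ^ 2) := by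
  refine le_trans (quad_left hu hu2 hu'2 b) ?_
  have h1 : (∫ x in Iio b, u x ^ 2) ≤ ∫ x, u x ^ 2 :=
    setIntegral_le_integral hu2 (Eventually.of_forall fun x => sq_nonneg _)
  have h2 : (∫ x in Iio b, deriv u x ^ 2) ≤ ∫ x, deriv u x ^ 2 :=
    setIntegral_le_integral hu'2 (Eventually.of_forall fun x => sq_nonneg _)
  have h1' : 0 ≤ (∫ x in Iio b, u x ^ 2) :=
    setIntegral_nonneg measurableSet_Iio fun x _ => sq_nonneg _
  have h2' : 0 ≤ (∫ x in Iio b, deriv u x ^ 2) :=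
    setIntegral_nonneg measurableSet_Iio fun x _ => sq_nonneg _
  nlinarith

lemma integrable_u6 (hu : Differentiable ℝ u) (hu2 : Integrable (fun x => (u x) ^ 2))
    (hu'2 : Integrable (fun x => (deriv u x) ^ 2)) :
    Integrable (fun x => u x ^ 6) := by
  set C := 4 * (∫ x, u x ^ 2) * (∫ x, deriv u x ^ 2) with hC
  refine Integrable.mono' (hu2.const_mul C) ?_ ?_
  · exact (hu.continuous.pow 6).aestronglyMeasurable
  · refine Eventually.of_forall fun x => ?_
    have h := global_quartic hu hu2 hu'2 x
    have : u x ^ 6 = (u x ^ 2) ^ 2 * u x ^ 2 := by ring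
    rw [Real.norm_eq_abs, abs_of_nonneg (by positivity), this]
    nlinarith [sq_nonneg (u x)]

lemma u6_pointwise (hu : Differentiable ℝ u) (hu2 : Integrable (fun x => (u x) ^ 2))
    (hu'2 : Integrable (fun x => (deriv u x) ^ 2)) (x : ℝ) :
    u x ^ 6 ≤ (4 * (∫ x, u x ^ 2) * (∫ x, deriv u x ^ 2)) * u x ^ 2 := by
  have h := global_quartic hu hu2 hu'2 x
  have : u x ^ 6 = (u x ^ 2) ^ 2 * u x ^ 2 := by ring
  rw [this]
  nlinarith [sq_nonneg (u x)]

/-- Derivative of the mass distribution function. -/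
lemma hasDerivAt_F (hu : Differentiable ℝ u) (hu2 : Integrable (fun x => (u x) ^ 2)) (x : ℝ) :
    HasDerivAt (fun y => ∫ t in Iic y, u t ^ 2) (u x ^ 2) x := by
  have key : ∀ y, (∫ t in Iic y, u t ^ 2)
      = (∫ t in Iic (0:ℝ), u t ^ 2) + ∫ t in (0:ℝ)..y, u t ^ 2 := by
    intro y
    have := intervalIntegral.integral_Iic_sub_Iic (hu2.integrableOn) (hu2.integrableOn) (a := 0) (b := y)
    linarith
  have h1 : HasDerivAt (fun y => ∫ t in (0:ℝ)..y, u t ^ 2) (u x ^ 2) x := by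
    refine intervalIntegral.integral_hasDerivAt_right hu2.intervalIntegrable ?_ ?_
    · exact ((hu.continuous.pow 2).stronglyMeasurableAtFilter _ _)
    · exact (hu.continuous.pow 2).continuousAt
  have h2 := h1.const_add (∫ t in Iic (0:ℝ), u t ^ 2)
  exact h2.congr_of_eventuallyEq (Eventually.of_forall fun y => (key y))

/-- If the mass to the left of `x` vanishes then `u` vanishes on `Iic x`. -/
lemma zero_of_left (hu : Differentiable ℝ u) (hu2 : Integrable (fun x => (u x) ^ 2))
    {x : ℝ} (hx : (∫ t in Iic x, u t ^ 2) = 0) : ∀ t ≤ x, u t = 0 := by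
  intro t htx
  by_contra hut
  have h2 : 0 < u t ^ 2 := by positivity
  obtain ⟨δ, hδ, hδ'⟩ := Metric.continuousAt_iff.mp (hu.continuous.pow 2).continuousAt (u t ^ 2 / 2) (by linarith)
  have hlow : ∀ s ∈ Ioo (t - δ) t, u t ^ 2 / 2 ≤ u s ^ 2 := by
    intro s hs
    have hd : dist s t < δ := by
      rw [Real.dist_eq, abs_lt]; constructor <;> [linarith [hs.1, hs.2]; linarith [hs.2]]
    have := hδ' hd
    rw [Real.dist_eq, abs_lt] at this
    simp only [Pi.pow_apply] at this
    linarith [this.1]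
  have hsub : Ioo (t - δ) t ⊆ Iic x := fun s hs => le_trans hs.2.le htx
  have h3 : u t ^ 2 / 2 * δ ≤ ∫ s in Ioo (t - δ) t, u s ^ 2 := by
    have := MeasureTheory.setIntegral_ge_of_const_le measurableSet_Ioo
      (by simp : volume (Ioo (t - δ) t) ≠ ⊤) hlow (hu2.integrableOn)
    rw [measureReal_def, Real.volume_Ioo, ENNReal.toReal_ofReal (by linarith), smul_eq_mul] at this
    have he : t - (t - δ) = δ := by ring
    rw [he] at this
    linarith
  have h4 : (∫ s in Ioo (t - δ) t, u s ^ 2) ≤ ∫ t in Iic x, u t ^ 2 := by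
    refine setIntegral_mono_set hu2.integrableOn
      (Eventually.of_forall fun s => sq_nonneg _)
      (HasSubset.Subset.eventuallyLE hsub)
  rw [hx] at h4
  nlinarith

/-- If the mass to the right of `x` vanishes then `u` vanishes on `Ici x`. -/
lemma zero_of_right (hu : Differentiable ℝ u) (hu2 : Integrable (fun x => (u x) ^ 2))
    {x : ℝ} (hx : (∫ t in Ioi x, u t ^ 2) = 0) : ∀ t, x ≤ t → u t = 0 := by
  intro t htx
  by_contra hut
  have h2 : 0 < u t ^ 2 := by positivity
  obtain ⟨δ, hδ, hδ'⟩ := Metric.continuousAt_iff.mp (hu.continuous.pow 2).continuousAt (u t ^ 2 / 2) (by linarith)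
  have hlow : ∀ s ∈ Ioo t (t + δ), u t ^ 2 / 2 ≤ u s ^ 2 := by
    intro s hs
    have hd : dist s t < δ := by
      rw [Real.dist_eq, abs_lt]; constructor <;> [linarith [hs.1]; linarith [hs.2]]
    have := hδ' hd
    rw [Real.dist_eq, abs_lt] at this
    simp only [Pi.pow_apply] at this
    linarith [this.1]
  have hsub : Ioo t (t + δ) ⊆ Ioi x := fun s hs => lt_of_le_of_lt htx hs.1
  have h3 : u t ^ 2 / 2 * δ ≤ ∫ s in Ioo t (t + δ), u s ^ 2 := by
    have := MeasureTheory.setIntegral_ge_of_const_le measurableSet_Ioo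
      (by simp : volume (Ioo t (t + δ)) ≠ ⊤) hlow (hu2.integrableOn)
    rw [measureReal_def, Real.volume_Ioo, ENNReal.toReal_ofReal (by linarith), smul_eq_mul] at this
    have he : t + δ - t = δ := by ring
    rw [he] at this
    linarith
  have h4 : (∫ s in Ioo t (t + δ), u s ^ 2) ≤ ∫ t in Ioi x, u t ^ 2 := by
    refine setIntegral_mono_set hu2.integrableOn
      (Eventually.of_forall fun s => sq_nonneg _)
      (HasSubset.Subset.eventuallyLE hsub)
  rw [hx] at h4
  nlinarith

/-- Cotangent bound: for `0 < t ≤ π/2`, `0 ≤ cot t` and `t * (cos t / sin t) ≤ 1`. -/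
lemma cot_bound {t : ℝ} (h0 : 0 < t) (h2 : t ≤ π / 2) :
    0 ≤ Real.cos t / Real.sin t ∧ t * (Real.cos t / Real.sin t) ≤ 1 := by
  have hπ := Real.pi_pos
  have hsin : 0 < Real.sin t := Real.sin_pos_of_pos_of_lt_pi h0 (by linarith)
  have hcos : 0 ≤ Real.cos t := Real.cos_nonneg_of_mem_Icc ⟨by linarith, h2⟩
  constructor
  · positivity
  · rcases lt_or_eq_of_le h2 with hlt | heq
    · have htan := Real.lt_tan h0 hlt
      rw [Real.tan_eq_sin_div_cos] at htan
      have hcos' : 0 < Real.cos t := Real.cos_pos_of_mem_Ioo ⟨by linarith, hlt⟩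
      have h3 : t * Real.cos t < Real.sin t := by
        have := (lt_div_iff₀ hcos').mp htan
        linarith
      rw [mul_div_assoc'] at *
      rw [div_le_one hsin]
      linarith
    · rw [heq, Real.cos_pi_div_two]
      simp

end GN

set_option maxHeartbeats 1000000 in
theorem stmt_17 (u : ℝ → ℝ) (hu : Differentiable ℝ u)
    (hu2 : Integrable (fun x => (u x) ^ 2))
    (hu'2 : Integrable (fun x => (deriv u x) ^ 2)) :
    ∫ x : ℝ, (u x) ^ 6
      ≤ (4 / Real.pi ^ 2) * (∫ x : ℝ, (u x) ^ 2) ^ 2 * ∫ x : ℝ, (deriv u x) ^ 2 := by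
  have hπ := Real.pi_pos
  set Mv := ∫ x : ℝ, u x ^ 2 with hMv
  set Ev := ∫ x : ℝ, deriv u x ^ 2 with hEv
  have hM0 : 0 ≤ Mv := integral_nonneg fun x => sq_nonneg _
  have hE0 : 0 ≤ Ev := integral_nonneg fun x => sq_nonneg _
  rcases eq_or_lt_of_le hM0 with hMzero | hMpos
  · -- degenerate case : u ≡ 0
    have hzero : ∀ x, u x = 0 := by
      have h1 : (fun x => u x ^ 2) =ᵐ[volume] 0 :=
        (integral_eq_zero_iff_of_nonneg (fun x => sq_nonneg (u x)) hu2).mp hMzero.symm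
      have h2 : (fun x => u x ^ 2) = (fun _ => (0:ℝ)) :=
        (Continuous.ae_eq_iff_eq volume (hu.continuous.pow 2) continuous_const).mp h1
      intro x
      have := congrFun h2 x
      simpa using pow_eq_zero_iff (n := 2) (by norm_num) |>.mp this
    have hL : (∫ x : ℝ, u x ^ 6) = 0 := by
      simp [hzero]
    rw [hL, ← hMzero]
    have : (4 / π ^ 2) * (0:ℝ) ^ 2 * Ev = 0 := by ring
    rw [this]
  · -- main case
    set F := fun y => ∫ t in Iic y, u t ^ 2 with hFdef
    set c := π / (2 * Mv) with hcdef
    have hcpos : 0 < c := by positivity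
    set θ := fun x => (π / Mv) * F x with hθdef
    set w := fun x => Real.cos (θ x) / Real.sin (θ x) with hwdef
    set D := fun x => c / 2 * (u x ^ 4 * w x) with hDdef
    set q := fun x => (deriv u x - c * (u x ^ 3 * w x)) ^ 2 with hqdef
    set S := {x : ℝ | 0 < F x ∧ F x < Mv} with hSdef
    have hF : ∀ x, HasDerivAt F (u x ^ 2) x := hasDerivAt_F hu hu2
    have hFc : Continuous F := by
      refine continuous_iff_continuousAt.mpr fun x => ((hF x).differentiableAt).continuousAt
    have hFmono : Monotone F := by
      intro a b hab
      have h := intervalIntegral.integral_Iic_sub_Iic (hu2.integrableOn) (hu2.integrableOn) (a := a) (b := b)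
      have h2 : 0 ≤ ∫ t in a..b, u t ^ 2 :=
        intervalIntegral.integral_nonneg hab fun t _ => sq_nonneg _
      simp only [hFdef]
      linarith
    have hF0 : ∀ x, 0 ≤ F x := fun x =>
      setIntegral_nonneg measurableSet_Iic fun t _ => sq_nonneg _
    have hsplit : ∀ x, F x + (∫ t in Ioi x, u t ^ 2) = Mv := by
      intro x
      exact intervalIntegral.integral_Iic_add_Ioi (hu2.integrableOn) (hu2.integrableOn)
    have hRnonneg : ∀ x, 0 ≤ ∫ t in Ioi x, u t ^ 2 := fun x =>
      setIntegral_nonneg measurableSet_Ioi fun t _ => sq_nonneg _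
    have hFM : ∀ x, F x ≤ Mv := fun x => by
      have := hsplit x; have := hRnonneg x; linarith
    have hθS : ∀ x ∈ S, 0 < θ x ∧ θ x < π := by
      intro x hx
      obtain ⟨h1, h2⟩ := hx
      constructor
      · have : 0 < π / Mv := by positivity
        exact mul_pos this h1
      · have h3 : (π / Mv) * F x < (π / Mv) * Mv :=
          mul_lt_mul_of_pos_left h2 (by positivity)
        have h4 : (π / Mv) * Mv = π := by field_simp
        simpa [h4] using h3
    have hsinS : ∀ x ∈ S, 0 < Real.sin (θ x) := fun x hx =>
      Real.sin_pos_of_pos_of_lt_pi (hθS x hx).1 (hθS x hx).2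
    -- derivative of w on S
    have hrel : π / Mv = 2 * c := by rw [hcdef]; field_simp
    have hwd : ∀ x ∈ S, HasDerivAt w (-(2 * c * u x ^ 2) * (1 + w x ^ 2)) x := by
      intro x hx
      have hθd : HasDerivAt θ (2 * c * u x ^ 2) x := by
        have h := (hF x).const_mul (π / Mv)
        have he : π / Mv * u x ^ 2 = 2 * c * u x ^ 2 := by rw [hrel]
        rw [he] at h
        exact h
      have hcosd : HasDerivAt (fun y => Real.cos (θ y)) (-Real.sin (θ x) * (2 * c * u x ^ 2)) x :=
        (Real.hasDerivAt_cos (θ x)).comp x hθd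
      have hsind : HasDerivAt (fun y => Real.sin (θ y)) (Real.cos (θ x) * (2 * c * u x ^ 2)) x :=
        (Real.hasDerivAt_sin (θ x)).comp x hθd
      have hsne : Real.sin (θ x) ≠ 0 := ne_of_gt (hsinS x hx)
      have hdiv := hcosd.div hsind hsne
      have hpy := Real.sin_sq_add_cos_sq (θ x)
      have hs2 : Real.sin (θ x) ^ 2 ≠ 0 := pow_ne_zero 2 hsne
      have hone : (1 : ℝ) + (Real.cos (θ x) / Real.sin (θ x)) ^ 2 = 1 / Real.sin (θ x) ^ 2 := by
        rw [div_pow]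
        field_simp
        exact hpy
      have hnum : -Real.sin (θ x) * (2 * c * u x ^ 2) * Real.sin (θ x) -
            Real.cos (θ x) * (Real.cos (θ x) * (2 * c * u x ^ 2)) = -(2 * c * u x ^ 2) := by
        linear_combination (-(2 * c * u x ^ 2)) * hpy
      have hval : (-Real.sin (θ x) * (2 * c * u x ^ 2) * Real.sin (θ x) -
            Real.cos (θ x) * (Real.cos (θ x) * (2 * c * u x ^ 2))) / Real.sin (θ x) ^ 2
          = -(2 * c * u x ^ 2) * (1 + w x ^ 2) := by
        rw [hnum, hwdef]
        simp only
        rw [hone, mul_one_div]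
      rw [hval] at hdiv
      exact hdiv
    -- derivative of D on S
    have hDd : ∀ x ∈ S, HasDerivAt D ((deriv u x ^ 2 - c ^ 2 * u x ^ 6) - q x) x := by
      intro x hx
      have hu4 : HasDerivAt (fun y => u y ^ 4) (4 * u x ^ 3 * deriv u x) x := by
        have := ((hu x).hasDerivAt).fun_pow 4
        exact this.congr_deriv (by norm_num)
      have hprod := hu4.mul (hwd x hx)
      have hD := hprod.const_mul (c / 2)
      have hval : c / 2 * (4 * u x ^ 3 * deriv u x * w x +
            u x ^ 4 * (-(2 * c * u x ^ 2) * (1 + w x ^ 2)))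
          = (deriv u x ^ 2 - c ^ 2 * u x ^ 6) - q x := by
        rw [hqdef]
        ring
      rw [hval] at hD
      exact hD
    -- S is order-connected
    have hSconn : ∀ a ∈ S, ∀ b ∈ S, Icc a b ⊆ S := by
      intro a ha b hb x hx
      exact ⟨lt_of_lt_of_le ha.1 (hFmono hx.1), lt_of_le_of_lt (hFmono hx.2) hb.2⟩
    -- main interval inequality
    have hkey : ∀ a ∈ S, ∀ b ∈ S, a ≤ b →
        c ^ 2 * ∫ x in Ioc a b, u x ^ 6 ≤ Ev + |D a| + |D b| := by
      intro a ha b hb hab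
      have hIcc : Icc a b ⊆ S := hSconn a ha b hb
      have hθcont : Continuous θ := continuous_const.mul hFc
      have hwcont : ContinuousOn w (Icc a b) := by
        refine ContinuousOn.div ?_ ?_ fun x hx => ne_of_gt (hsinS x (hIcc hx))
        · exact (Real.continuous_cos.comp hθcont).continuousOn
        · exact (Real.continuous_sin.comp hθcont).continuousOn
      have hgcont : ContinuousOn (fun x => c * (u x ^ 3 * w x)) (Icc a b) :=
        continuousOn_const.mul (((hu.continuous.pow 3).continuousOn).mul hwcont)
      have hg2int : IntegrableOn (fun x => (c * (u x ^ 3 * w x)) ^ 2) (Ioc a b) :=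
        ((hgcont.pow 2).integrableOn_Icc).mono_set Ioc_subset_Icc_self
      have h1m : AEStronglyMeasurable (deriv u) (volume.restrict (Ioc a b)) :=
        (meas_u' u).restrict
      have h2m : AEStronglyMeasurable (fun x => c * (u x ^ 3 * w x))
          (volume.restrict (Ioc a b)) :=
        (hgcont.mono Ioc_subset_Icc_self).aestronglyMeasurable measurableSet_Ioc
      have hqmeas : AEStronglyMeasurable q (volume.restrict (Ioc a b)) := by
        have h3 := (h1m.sub h2m).mul (h1m.sub h2m)
        refine h3.congr (Eventually.of_forall fun x => ?_)
        rw [hqdef]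
        simp only [Pi.sub_apply, Pi.mul_apply]
        ring
      have hqint : IntegrableOn q (Ioc a b) := by
        refine Integrable.mono' ((hu'2.integrableOn.const_mul 2).add (hg2int.const_mul 2))
          hqmeas (Eventually.of_forall fun x => ?_)
        rw [Real.norm_eq_abs, hqdef]
        simp only [Pi.add_apply]
        rw [abs_of_nonneg (sq_nonneg _)]
        nlinarith [sq_nonneg (deriv u x + c * (u x ^ 3 * w x))]
      have hint6 : IntegrableOn (fun x => u x ^ 6) (Ioc a b) :=
        (integrable_u6 hu hu2 hu'2).integrableOn
      have hc6 : IntegrableOn (fun x => c ^ 2 * u x ^ 6) (Ioc a b) := hint6.const_mul (c ^ 2)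
      have hd2 : IntegrableOn (fun x => deriv u x ^ 2) (Ioc a b) := hu'2.integrableOn
      have hfg : IntegrableOn (fun x => deriv u x ^ 2 - c ^ 2 * u x ^ 6) (Ioc a b) :=
        hd2.sub hc6
      have hintD' : IntervalIntegrable
          (fun x => (deriv u x ^ 2 - c ^ 2 * u x ^ 6) - q x) volume a b := by
        rw [intervalIntegrable_iff_integrableOn_Ioc_of_le hab]
        exact hfg.sub hqint
      have hFTC := intervalIntegral.integral_eq_sub_of_hasDerivAt
          (f := D) (f' := fun x => (deriv u x ^ 2 - c ^ 2 * u x ^ 6) - q x)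
          (fun x hx => hDd x (hIcc (by rwa [Set.uIcc_of_le hab] at hx))) hintD'
      rw [intervalIntegral.integral_of_le hab,
        integral_sub hfg hqint, integral_sub hd2 hc6,
        integral_const_mul] at hFTC
      have hq0 : 0 ≤ ∫ x in Ioc a b, q x :=
        setIntegral_nonneg measurableSet_Ioc fun x _ => sq_nonneg _
      have hEb : (∫ x in Ioc a b, deriv u x ^ 2) ≤ Ev :=
        setIntegral_le_integral hu'2 (Eventually.of_forall fun x => sq_nonneg _)
      have h1 := le_abs_self (D a)
      have h2 := neg_abs_le (D b)
      linarith

    -- left boundary bound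
    have hDleft : ∀ a ∈ S, F a ≤ Mv / 2 → |D a| ≤ ∫ x in Iio a, deriv u x ^ 2 := by
      intro a ha hFa
      have hA0 : 0 ≤ ∫ x in Iio a, deriv u x ^ 2 :=
        setIntegral_nonneg measurableSet_Iio fun x _ => sq_nonneg _
      have hθa : 0 < θ a := (hθS a ha).1
      have hθa2 : θ a ≤ π / 2 := by
        have h1 : π / Mv * F a ≤ π / Mv * (Mv / 2) :=
          mul_le_mul_of_nonneg_left hFa (by positivity)
        have h2 : π / Mv * (Mv / 2) = π / 2 := by field_simp
        rw [hθdef]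
        simp only
        linarith
      obtain ⟨hw0, hwθ⟩ := cot_bound hθa hθa2
      have hw0' : 0 ≤ w a := hw0
      have hwθ' : θ a * w a ≤ 1 := hwθ
      have hq4 := quad_left hu hu2 hu'2 a
      have hPle : (∫ x in Iio a, u x ^ 2) ≤ F a := by
        rw [hFdef]
        exact setIntegral_mono_set hu2.integrableOn
          (Eventually.of_forall fun x => sq_nonneg _)
          (HasSubset.Subset.eventuallyLE Iio_subset_Iic_self)
      have hPnn : 0 ≤ ∫ x in Iio a, u x ^ 2 :=
        setIntegral_nonneg measurableSet_Iio fun x _ => sq_nonneg _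
      have h4 : u a ^ 4 ≤ 4 * F a * ∫ x in Iio a, deriv u x ^ 2 := by
        nlinarith [hq4, hPle, hA0, hPnn]
      have hDnn : 0 ≤ D a := by
        rw [hDdef]
        exact mul_nonneg (by positivity) (mul_nonneg (by positivity) hw0')
      rw [abs_of_nonneg hDnn]
      set A := ∫ x in Iio a, deriv u x ^ 2
      have hπFw : π * (F a * w a) ≤ Mv := by
        have h1 := mul_le_mul_of_nonneg_right hwθ' hM0
        have h2 : θ a * w a * Mv = π * (F a * w a) := by
          rw [hθdef]
          simp only
          field_simp
        rw [h2, one_mul] at h1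
        exact h1
      have step1 : D a ≤ 2 * c * A * (F a * w a) := by
        have hm := mul_le_mul_of_nonneg_right h4 hw0'
        have : D a = c / 2 * (u a ^ 4 * w a) := by rw [hDdef]
        nlinarith [hm, hcpos]
      have step2 : π * (2 * c * A * (F a * w a)) ≤ 2 * c * A * Mv := by
        have := mul_le_mul_of_nonneg_left hπFw
          (by positivity : (0:ℝ) ≤ 2 * c * A)
        nlinarith [this]
      have step3 : 2 * c * A * Mv = π * A := by
        rw [hcdef]
        field_simp
      have m1 := mul_le_mul_of_nonneg_left step1 hπ.le
      have : π * D a ≤ π * A := by linarith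
      exact le_of_mul_le_mul_left this hπ

    -- right boundary bound
    have hDright : ∀ b ∈ S, Mv / 2 ≤ F b → |D b| ≤ ∫ x in Ioi b, deriv u x ^ 2 := by
      intro b hb hFb
      have hB0 : 0 ≤ ∫ x in Ioi b, deriv u x ^ 2 :=
        setIntegral_nonneg measurableSet_Ioi fun x _ => sq_nonneg _
      have hθb1 : θ b < π := (hθS b hb).2
      have hθb2 : π / 2 ≤ θ b := by
        have h1 : π / Mv * (Mv / 2) ≤ π / Mv * F b :=
          mul_le_mul_of_nonneg_left hFb (by positivity)
        have h2 : π / Mv * (Mv / 2) = π / 2 := by field_simp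
        rw [hθdef]
        simp only
        linarith
      have hc1 : 0 < π - θ b := by linarith
      have hc2 : π - θ b ≤ π / 2 := by linarith
      obtain ⟨hw0, hwθ⟩ := cot_bound hc1 hc2
      rw [Real.cos_pi_sub, Real.sin_pi_sub] at hw0 hwθ
      have hw0' : 0 ≤ -(w b) := by
        rw [hwdef]
        simp only
        rw [← neg_div]
        exact hw0
      have hwθ' : (π - θ b) * (-(w b)) ≤ 1 := by
        rw [hwdef]
        simp only
        rw [← neg_div]
        exact hwθ
      have hq4 := quad_right hu hu2 hu'2 b
      have hIoi : (∫ t in Ioi b, u t ^ 2) = Mv - F b := by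
        have := hsplit b
        linarith
      have h4 : u b ^ 4 ≤ 4 * (Mv - F b) * ∫ x in Ioi b, deriv u x ^ 2 := by
        nlinarith [hq4, hIoi.ge, hB0]
      have hMF : 0 < Mv - F b := by have := hb.2; linarith
      have hDnp : D b ≤ 0 := by
        have hwb : w b ≤ 0 := by linarith
        rw [hDdef]
        simp only
        have := mul_nonpos_of_nonneg_of_nonpos (by positivity : (0:ℝ) ≤ u b ^ 4) hwb
        nlinarith [hcpos]
      rw [abs_of_nonpos hDnp]
      set B := ∫ x in Ioi b, deriv u x ^ 2
      have hπFw : π * ((Mv - F b) * (-(w b))) ≤ Mv := by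
        have h1 := mul_le_mul_of_nonneg_right hwθ' hM0
        have h3 : π / Mv * F b * Mv = π * F b := by field_simp
        have h2 : (π - θ b) * (-(w b)) * Mv = π * ((Mv - F b) * (-(w b))) := by
          rw [hθdef]
          simp only
          linear_combination (w b) * h3
        rw [h2, one_mul] at h1
        exact h1
      have step1 : -(D b) ≤ 2 * c * B * ((Mv - F b) * (-(w b))) := by
        have hm := mul_le_mul_of_nonneg_right h4 hw0'
        have : D b = c / 2 * (u b ^ 4 * w b) := by rw [hDdef]
        nlinarith [hm, hcpos]
      have step2 : π * (2 * c * B * ((Mv - F b) * (-(w b)))) ≤ 2 * c * B * Mv := by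
        have := mul_le_mul_of_nonneg_left hπFw
          (by positivity : (0:ℝ) ≤ 2 * c * B)
        nlinarith [this]
      have step3 : 2 * c * B * Mv = π * B := by
        rw [hcdef]
        field_simp
      have m1 := mul_le_mul_of_nonneg_left step1 hπ.le
      have : π * (-(D b)) ≤ π * B := by linarith
      exact le_of_mul_le_mul_left this hπ

    -- attainment of intermediate values
    have hattain : ∀ δ : ℝ, 0 < δ → δ < Mv → ∃ x, F x = δ := by
      intro δ hδ0 hδM
      have hlo : ∃ y : ℝ, F y < δ := by
        have htend := tendsto_setIntegral_of_antitone (μ := volume)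
          (f := fun t => u t ^ 2) (s := fun n : ℕ => Iic (-(n:ℝ)))
          (fun n => measurableSet_Iic)
          (fun m n hmn => Iic_subset_Iic.mpr (by exact_mod_cast neg_le_neg (Nat.cast_le.mpr hmn)))
          ⟨0, hu2.integrableOn⟩
        have hempty : (⋂ n : ℕ, Iic (-(n:ℝ))) = ∅ := by
          apply eq_empty_of_forall_notMem
          intro x hx
          obtain ⟨n, hn⟩ := exists_nat_gt (-x)
          have := mem_iInter.mp hx n
          rw [mem_Iic] at this
          linarith
        rw [hempty] at htend
        simp only [Measure.restrict_empty, integral_zero_measure] at htend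
        obtain ⟨n, hn⟩ := (htend.eventually (eventually_lt_nhds hδ0)).exists
        exact ⟨-(n:ℝ), hn⟩
      have hhi : ∃ y : ℝ, δ < F y := by
        have huniv : (⋃ n : ℕ, Iic ((n:ℝ))) = univ := by
          apply eq_univ_of_forall
          intro x
          obtain ⟨n, hn⟩ := exists_nat_gt x
          exact mem_iUnion.mpr ⟨n, mem_Iic.mpr hn.le⟩
        have htend := tendsto_setIntegral_of_monotone (μ := volume)
          (f := fun t => u t ^ 2) (s := fun n : ℕ => Iic ((n:ℝ)))
          (fun n => measurableSet_Iic)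
          (fun m n hmn => Iic_subset_Iic.mpr (Nat.cast_le.mpr hmn))
          (by rw [huniv]; exact hu2.integrableOn)
        rw [huniv] at htend
        rw [Measure.restrict_univ] at htend
        obtain ⟨n, hn⟩ := (htend.eventually (eventually_gt_nhds hδM)).exists
        exact ⟨n, hn⟩
      obtain ⟨y₁, hy₁⟩ := hlo
      obtain ⟨y₂, hy₂⟩ := hhi
      have hy12 : y₁ ≤ y₂ := by
        by_contra h
        have := hFmono (le_of_not_ge h)
        linarith
      obtain ⟨x, _, hx⟩ := intermediate_value_Icc hy12 hFc.continuousOn ⟨hy₁.le, hy₂.le⟩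
      exact ⟨x, hx⟩
    -- sequences of cut points
    set dseq := fun n : ℕ => Mv / 4 * (1 / ((n:ℝ) + 1)) with hdseq
    have hdpos : ∀ n, 0 < dseq n := fun n => by
      rw [hdseq]; positivity
    have hdle : ∀ n, dseq n ≤ Mv / 4 := by
      intro n
      rw [hdseq]
      simp only
      have h1 : 1 / ((n:ℝ) + 1) ≤ 1 := by
        rw [div_le_one (by positivity)]
        simp [Nat.cast_nonneg]
      nlinarith [hMpos]
    have hdtend : Tendsto dseq atTop (𝓝 0) := by
      have h := tendsto_one_div_add_atTop_nhds_zero_nat.const_mul (Mv / 4)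
      rw [mul_zero] at h
      exact h.congr fun n => by rw [hdseq]
    have hdmono : ∀ n, dseq (n + 1) < dseq n := by
      intro n
      rw [hdseq]
      simp only
      have h2 : (1:ℝ) / ((n:ℝ) + 1 + 1) < 1 / ((n:ℝ) + 1) := by
        apply div_lt_div_of_pos_left one_pos (by positivity)
        push_cast
        linarith
      push_cast
      nlinarith [hMpos]
    choose α hα using fun n => hattain (dseq n) (hdpos n)
      (by nlinarith [hdle n, hMpos, hdpos n])
    choose β hβ using fun n => hattain (Mv - dseq n)
      (by nlinarith [hdle n, hMpos]) (by nlinarith [hdpos n])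
    have hαS : ∀ n, α n ∈ S := fun n => by
      constructor
      · rw [hα n]; exact hdpos n
      · rw [hα n]; nlinarith [hdle n, hMpos]
    have hβS : ∀ n, β n ∈ S := fun n => by
      constructor
      · rw [hβ n]; nlinarith [hdle n, hMpos]
      · rw [hβ n]; nlinarith [hdpos n]
    have hαanti : Antitone α := by
      apply antitone_nat_of_succ_le
      intro n
      by_contra h
      have h2 := hFmono (le_of_not_ge h)
      rw [hα n, hα (n + 1)] at h2
      exact absurd h2 (not_le.mpr (hdmono n))
    have hβmono : Monotone β := by
      apply monotone_nat_of_le_succ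
      intro n
      by_contra h
      have h2 := hFmono (le_of_not_ge h)
      rw [hβ n, hβ (n + 1)] at h2
      have := hdmono n
      linarith
    have hαβ : ∀ n, α n ≤ β n := by
      intro n
      by_contra h
      have h2 := hFmono (le_of_not_ge h)
      rw [hα n, hβ n] at h2
      nlinarith [hdle n, hMpos, hdpos n]
    -- tail integrals of the derivative tend to zero (left)
    have hAtend : Tendsto (fun n => ∫ x in Iio (α n), deriv u x ^ 2) atTop (𝓝 0) := by
      have htend := tendsto_setIntegral_of_antitone (μ := volume)
        (f := fun x => deriv u x ^ 2) (s := fun n : ℕ => Iio (α n))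
        (fun n => measurableSet_Iio)
        (fun m n hmn => Iio_subset_Iio (hαanti hmn))
        ⟨0, hu'2.integrableOn⟩
      have hzero : (∫ x in ⋂ n : ℕ, Iio (α n), deriv u x ^ 2) = 0 := by
        set T := ⋂ n : ℕ, Iio (α n) with hT
        have hTmeas : MeasurableSet T := MeasurableSet.iInter fun n => measurableSet_Iio
        have hTF : ∀ x ∈ T, F x = 0 := by
          intro x hx
          have hle : ∀ n : ℕ, F x ≤ dseq n := by
            intro n
            have hxn : x < α n := mem_iInter.mp hx n
            calc F x ≤ F (α n) := hFmono hxn.le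
              _ = dseq n := hα n
          have hle0 : F x ≤ 0 := ge_of_tendsto hdtend (Eventually.of_forall hle)
          exact le_antisymm hle0 (hF0 x)
        have hTzero : ∀ x ∈ T, ∀ t ≤ x, u t = 0 := fun x hx =>
          zero_of_left hu hu2 (hTF x hx)
        have hderiv0 : ∀ x ∈ T, (∃ y ∈ T, x < y) → deriv u x = 0 := by
          rintro x hx ⟨y, hy, hxy⟩
          have hev : u =ᶠ[𝓝 x] (fun _ => (0:ℝ)) :=
            Filter.eventuallyEq_of_mem (Iio_mem_nhds hxy)
              (fun t ht => hTzero y hy t (le_of_lt ht))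
          rw [hev.deriv_eq, deriv_const]
        set N := {x ∈ T | ¬ ∃ y ∈ T, x < y} with hN
        have hNsub : N.Subsingleton := by
          intro x₁ h₁ x₂ h₂
          by_contra hne
          rcases lt_or_gt_of_ne hne with h | h
          · exact h₁.2 ⟨x₂, h₂.1, h⟩
          · exact h₂.2 ⟨x₁, h₁.1, h⟩
        have hNnull : volume N = 0 := hNsub.measure_zero _
        have hae : (fun x => deriv u x ^ 2) =ᵐ[volume.restrict T] 0 := by
          rw [EventuallyEq, ae_restrict_iff' hTmeas]
          have h1 : ∀ᵐ x : ℝ ∂volume, x ∉ N := measure_eq_zero_iff_ae_notMem.mp hNnull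
          filter_upwards [h1] with x hxN hxT
          by_cases hex : ∃ y ∈ T, x < y
          · simp [hderiv0 x hxT hex]
          · exact absurd ⟨hxT, hex⟩ hxN
        calc ∫ x in T, deriv u x ^ 2 = ∫ _ in T, (0:ℝ) := integral_congr_ae hae
          _ = 0 := by simp
      rw [hzero] at htend
      exact htend
    -- tail integrals of the derivative tend to zero (right)
    have hBtend : Tendsto (fun n => ∫ x in Ioi (β n), deriv u x ^ 2) atTop (𝓝 0) := by
      have htend := tendsto_setIntegral_of_antitone (μ := volume)
        (f := fun x => deriv u x ^ 2) (s := fun n : ℕ => Ioi (β n))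
        (fun n => measurableSet_Ioi)
        (fun m n hmn => Ioi_subset_Ioi (hβmono hmn))
        ⟨0, hu'2.integrableOn⟩
      have hzero : (∫ x in ⋂ n : ℕ, Ioi (β n), deriv u x ^ 2) = 0 := by
        set T := ⋂ n : ℕ, Ioi (β n) with hT
        have hTmeas : MeasurableSet T := MeasurableSet.iInter fun n => measurableSet_Ioi
        have hTF : ∀ x ∈ T, (∫ t in Ioi x, u t ^ 2) = 0 := by
          intro x hx
          have hle : ∀ n : ℕ, (∫ t in Ioi x, u t ^ 2) ≤ dseq n := by
            intro n
            have hxn : β n < x := mem_iInter.mp hx n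
            have hsub : (∫ t in Ioi x, u t ^ 2) ≤ ∫ t in Ioi (β n), u t ^ 2 :=
              setIntegral_mono_set hu2.integrableOn
                (Eventually.of_forall fun t => sq_nonneg _)
                (HasSubset.Subset.eventuallyLE (Ioi_subset_Ioi hxn.le))
            have heq : (∫ t in Ioi (β n), u t ^ 2) = dseq n := by
              have := hsplit (β n)
              rw [hβ n] at this
              linarith
            linarith
          have hle0 : (∫ t in Ioi x, u t ^ 2) ≤ 0 :=
            ge_of_tendsto hdtend (Eventually.of_forall hle)
          exact le_antisymm hle0 (hRnonneg x)
        have hTzero : ∀ x ∈ T, ∀ t, x ≤ t → u t = 0 := fun x hx =>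
          zero_of_right hu hu2 (hTF x hx)
        have hderiv0 : ∀ x ∈ T, (∃ y ∈ T, y < x) → deriv u x = 0 := by
          rintro x hx ⟨y, hy, hxy⟩
          have hev : u =ᶠ[𝓝 x] (fun _ => (0:ℝ)) :=
            Filter.eventuallyEq_of_mem (Ioi_mem_nhds hxy)
              (fun t ht => hTzero y hy t (le_of_lt ht))
          rw [hev.deriv_eq, deriv_const]
        set N := {x ∈ T | ¬ ∃ y ∈ T, y < x} with hN
        have hNsub : N.Subsingleton := by
          intro x₁ h₁ x₂ h₂
          by_contra hne
          rcases lt_or_gt_of_ne hne with h | h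
          · exact h₂.2 ⟨x₁, h₁.1, h⟩
          · exact h₁.2 ⟨x₂, h₂.1, h⟩
        have hNnull : volume N = 0 := hNsub.measure_zero _
        have hae : (fun x => deriv u x ^ 2) =ᵐ[volume.restrict T] 0 := by
          rw [EventuallyEq, ae_restrict_iff' hTmeas]
          have h1 : ∀ᵐ x : ℝ ∂volume, x ∉ N := measure_eq_zero_iff_ae_notMem.mp hNnull
          filter_upwards [h1] with x hxN hxT
          by_cases hex : ∃ y ∈ T, y < x
          · simp [hderiv0 x hxT hex]
          · exact absurd ⟨hxT, hex⟩ hxN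
        calc ∫ x in T, deriv u x ^ 2 = ∫ _ in T, (0:ℝ) := integral_congr_ae hae
          _ = 0 := by simp
      rw [hzero] at htend
      exact htend
    -- per-n main inequality
    set C6 := 4 * Mv * Ev with hC6
    have hC60 : 0 ≤ C6 := by rw [hC6]; positivity
    have hint6' : Integrable (fun x => u x ^ 6) := integrable_u6 hu hu2 hu'2
    have hmain : ∀ n, c ^ 2 * (∫ x : ℝ, u x ^ 6)
        ≤ Ev + (∫ x in Iio (α n), deriv u x ^ 2) + (∫ x in Ioi (β n), deriv u x ^ 2)
          + c ^ 2 * (2 * C6 * dseq n) := by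
      intro n
      have hk := hkey (α n) (hαS n) (β n) (hβS n) (hαβ n)
      have hDl := hDleft (α n) (hαS n) (by rw [hα n]; nlinarith [hdle n, hMpos])
      have hDr := hDright (β n) (hβS n) (by rw [hβ n]; nlinarith [hdle n, hMpos])
      -- splitting of the u^6 integral
      have e1 := intervalIntegral.integral_Iic_add_Ioi (b := α n)
        (hint6'.integrableOn) (hint6'.integrableOn)
      have e2 := intervalIntegral.integral_Iic_add_Ioi (b := β n)
        (hint6'.integrableOn) (hint6'.integrableOn)
      have e3 : (∫ x in Iic (β n), u x ^ 6) - ∫ x in Iic (α n), u x ^ 6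
          = ∫ x in Ioc (α n) (β n), u x ^ 6 := by
        rw [intervalIntegral.integral_Iic_sub_Iic hint6'.integrableOn hint6'.integrableOn,
          intervalIntegral.integral_of_le (hαβ n)]
      -- bounds on tails of u^6
      have hb1 : (∫ x in Iic (α n), u x ^ 6) ≤ C6 * dseq n := by
        calc (∫ x in Iic (α n), u x ^ 6) ≤ ∫ x in Iic (α n), C6 * u x ^ 2 := by
              refine setIntegral_mono_on hint6'.integrableOn
                ((hu2.const_mul C6).integrableOn) measurableSet_Iic
                (fun x _ => u6_pointwise hu hu2 hu'2 x)
          _ = C6 * F (α n) := by rw [integral_const_mul]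
          _ = C6 * dseq n := by rw [hα n]
      have hb2 : (∫ x in Ioi (β n), u x ^ 6) ≤ C6 * dseq n := by
        have heq : (∫ t in Ioi (β n), u t ^ 2) = dseq n := by
          have := hsplit (β n)
          rw [hβ n] at this
          linarith
        calc (∫ x in Ioi (β n), u x ^ 6) ≤ ∫ x in Ioi (β n), C6 * u x ^ 2 := by
              refine setIntegral_mono_on hint6'.integrableOn
                ((hu2.const_mul C6).integrableOn) measurableSet_Ioi
                (fun x _ => u6_pointwise hu hu2 hu'2 x)
          _ = C6 * (∫ t in Ioi (β n), u t ^ 2) := by rw [integral_const_mul]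
          _ = C6 * dseq n := by rw [heq]
      have hIoc : (∫ x : ℝ, u x ^ 6) - 2 * C6 * dseq n ≤ ∫ x in Ioc (α n) (β n), u x ^ 6 := by
        linarith [e1, e2, e3, hb1, hb2]
      have hc2nn : (0:ℝ) ≤ c ^ 2 := sq_nonneg c
      have hmono := mul_le_mul_of_nonneg_left hIoc hc2nn
      nlinarith [hk, hDl, hDr, hmono]
    -- pass to the limit
    have hfinal : c ^ 2 * (∫ x : ℝ, u x ^ 6) ≤ Ev := by
      have hR : Tendsto (fun n => Ev + (∫ x in Iio (α n), deriv u x ^ 2)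
          + (∫ x in Ioi (β n), deriv u x ^ 2) + c ^ 2 * (2 * C6 * dseq n)) atTop
          (𝓝 (Ev + 0 + 0 + c ^ 2 * (2 * C6 * 0))) := by
        refine ((tendsto_const_nhds.add hAtend).add hBtend).add ?_
        exact ((hdtend.const_mul (2 * C6)).const_mul (c ^ 2))
      have hval : Ev + 0 + 0 + c ^ 2 * (2 * C6 * 0) = Ev := by ring
      rw [hval] at hR
      exact ge_of_tendsto hR (Eventually.of_forall hmain)
    -- conclusion
    have hc2 : c ^ 2 = π ^ 2 / (4 * Mv ^ 2) := by
      rw [hcdef]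
      field_simp
      ring
    have hc2pos : 0 < c ^ 2 := by positivity
    have hX : (∫ x : ℝ, u x ^ 6) ≤ Ev / c ^ 2 := by
      rw [le_div_iff₀ hc2pos]
      linarith [hfinal]
    have hEq : Ev / c ^ 2 = 4 / π ^ 2 * Mv ^ 2 * Ev := by
      rw [hc2]
      field_simp
    linarith [hX, hEq.le, hEq.ge]
end

section
/- Sharp Gagliardo–Nirenberg inequality on the half-line: if u : ℝ → ℝ is continuous on [0, ∞), differentiable on (0, ∞), with u and u' square-integrable on (0, ∞), then ∫₀^∞ u⁶ ≤ (16/π²)·(∫₀^∞ u²)²·(∫₀^∞ (u')²). (The constant 16/π² equals 3/μ_{ℝ⁺}² with μ_{ℝ⁺} = √3·π/4 the critical mass of the half-line.) -/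
open Real MeasureTheory Set Filter Topology

lemma hasDerivAt_H (β s : ℝ) (hβ : 0 < β) (hs : |s| < β) :
    HasDerivAt (fun t => t * Real.sqrt (β^2 - t^2) / 4 + (β^2/4) * Real.arcsin (t/β))
      (Real.sqrt (β^2 - s^2) / 2) s := by
  have hD : 0 < β^2 - s^2 := by nlinarith [abs_nonneg s, le_abs_self s, neg_abs_le s, sq_abs s]
  set D := β^2 - s^2 with hDdef
  have hsq : 0 < Real.sqrt D := Real.sqrt_pos.mpr hD
  have hsq2 : Real.sqrt D * Real.sqrt D = D := Real.mul_self_sqrt hD.le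
  have h1 : HasDerivAt (fun t : ℝ => β^2 - t^2) (-(2*s)) s := by
    simpa using (hasDerivAt_pow 2 s).const_sub (β^2)
  have h2 : HasDerivAt (fun t : ℝ => Real.sqrt (β^2 - t^2)) (1/(2*Real.sqrt D) * (-(2*s))) s :=
    (Real.hasDerivAt_sqrt hD.ne').comp s h1
  have h3 : HasDerivAt (fun t : ℝ => t * Real.sqrt (β^2 - t^2))
      (1 * Real.sqrt D + s * (1/(2*Real.sqrt D) * (-(2*s)))) s :=
    (hasDerivAt_id s).mul h2
  have habs : -β < s ∧ s < β := abs_lt.mp hs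
  have hb1 : s/β ≠ -1 := by
    intro h
    rw [div_eq_iff hβ.ne'] at h
    linarith [habs.1, h]
  have hb2 : s/β ≠ 1 := by
    intro h
    rw [div_eq_iff hβ.ne'] at h
    linarith [habs.2, h]
  have h4 : HasDerivAt (fun t : ℝ => Real.arcsin (t/β)) (1 / Real.sqrt (1 - (s/β)^2) * (1/β)) s := by
    have hdiv : HasDerivAt (fun t : ℝ => t/β) (1/β) s := (hasDerivAt_id s).div_const β
    exact (Real.hasDerivAt_arcsin hb1 hb2).comp s hdiv
  have hsimp : Real.sqrt (1 - (s/β)^2) = Real.sqrt D / β := by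
    have h : 1 - (s/β)^2 = D / β^2 := by field_simp [hDdef]; exact hDdef.symm
    rw [h, Real.sqrt_div hD.le, Real.sqrt_sq hβ.le]
  have := (h3.div_const 4).add (h4.const_mul (β^2/4))
  refine this.congr_deriv ?_
  rw [hsimp]
  field_simp
  linear_combination (-2) * (hsq2 + hDdef)

set_option maxHeartbeats 2000000 in
theorem stmt_18 (u : ℝ → ℝ) (hc : ContinuousOn u (Set.Ici 0))
    (hd : DifferentiableOn ℝ u (Set.Ioi 0))
    (hu2 : IntegrableOn (fun x => (u x) ^ 2) (Set.Ioi 0))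
    (hu'2 : IntegrableOn (fun x => (deriv u x) ^ 2) (Set.Ioi 0)) :
    ∫ x in Set.Ioi (0:ℝ), (u x) ^ 6
      ≤ (16 / Real.pi ^ 2) * (∫ x in Set.Ioi (0:ℝ), (u x) ^ 2) ^ 2
          * ∫ x in Set.Ioi (0:ℝ), (deriv u x) ^ 2 := by
  have hM0 : 0 ≤ ∫ x in Set.Ioi (0:ℝ), (u x) ^ 2 :=
    integral_nonneg fun x => by positivity
  have hE0 : 0 ≤ ∫ x in Set.Ioi (0:ℝ), (deriv u x) ^ 2 :=
    integral_nonneg fun x => by positivity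
  have hRHS0 : 0 ≤ (16 / Real.pi ^ 2) * (∫ x in Set.Ioi (0:ℝ), (u x) ^ 2) ^ 2
      * ∫ x in Set.Ioi (0:ℝ), (deriv u x) ^ 2 := by positivity
  by_cases h6 : IntegrableOn (fun x => (u x) ^ 6) (Set.Ioi 0)
  swap
  · rw [integral_undef h6]; exact hRHS0
  set M := ∫ x in Set.Ioi (0:ℝ), (u x) ^ 2 with hMdef
  set E := ∫ x in Set.Ioi (0:ℝ), (deriv u x) ^ 2 with hEdef
  set I := ∫ x in Set.Ioi (0:ℝ), (u x) ^ 6 with hIdef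
  clear_value M E I
  -- measurability
  have humeas : AEStronglyMeasurable u (volume.restrict (Set.Ioi 0)) :=
    (hc.mono Set.Ioi_subset_Ici_self).aestronglyMeasurable measurableSet_Ioi
  have hu'meas : AEStronglyMeasurable (deriv u) (volume.restrict (Set.Ioi 0)) :=
    (measurable_deriv u).aestronglyMeasurable
  -- u * u' integrable
  have huu' : IntegrableOn (fun x => u x * deriv u x) (Set.Ioi 0) := by
    apply Integrable.mono' ((hu2.add hu'2).div_const 2) (humeas.mul hu'meas)
    filter_upwards with x
    simp only [Pi.add_apply, Pi.mul_apply, Real.norm_eq_abs, abs_mul]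
    nlinarith [sq_nonneg (|u x| - |deriv u x|), sq_abs (u x), sq_abs (deriv u x),
      abs_nonneg (u x), abs_nonneg (deriv u x)]
  -- derivative facts
  have hu_deriv : ∀ x ∈ Set.Ioi (0:ℝ), HasDerivAt u (deriv u x) x := fun x hx =>
    (hd.differentiableAt (Ioi_mem_nhds hx)).hasDerivAt
  have hsq_deriv : ∀ x ∈ Set.Ioi (0:ℝ), HasDerivAt (fun y => u y ^ 2) (2 * (u x * deriv u x)) x := by
    intro x hx
    have := (hu_deriv x hx).pow 2
    refine this.congr_deriv ?_
    ring
  have h2uu' : IntegrableOn (fun x => 2 * (u x * deriv u x)) (Set.Ioi 0) := huu'.const_mul 2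
  -- FTC for u^2 on [1,y]
  have key1 : ∀ y : ℝ, 1 ≤ y → u y ^ 2 = u 1 ^ 2 + ∫ t in (1:ℝ)..y, 2 * (u t * deriv u t) := by
    intro y hy
    have hsub : Set.uIcc (1:ℝ) y ⊆ Set.Ioi 0 := by
      rw [Set.uIcc_of_le hy]
      intro t ht; exact lt_of_lt_of_le one_pos ht.1
    have := intervalIntegral.integral_eq_sub_of_hasDerivAt
      (f := fun y => u y ^ 2) (f' := fun t => 2 * (u t * deriv u t))
      (fun t ht => hsq_deriv t (hsub ht))
      ((h2uu'.mono_set hsub).intervalIntegrable)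
    linarith [this]
  -- limit of u^2 at infinity
  have hulim : Tendsto (fun y => u y ^ 2) atTop (𝓝 0) := by
    have hlim2 : Tendsto (fun y => u y ^ 2) atTop
        (𝓝 (u 1 ^ 2 + ∫ t in Set.Ioi 1, 2 * (u t * deriv u t))) := by
      have h1 := MeasureTheory.intervalIntegral_tendsto_integral_Ioi 1
          (h2uu'.mono_set (Set.Ioi_subset_Ioi one_pos.le)) tendsto_id
      apply (h1.const_add (u 1 ^ 2)).congr'
      filter_upwards [eventually_ge_atTop (1:ℝ)] with y hy
      exact (key1 y hy).symm
    set c := u 1 ^ 2 + ∫ t in Set.Ioi 1, 2 * (u t * deriv u t) with hcdef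
    have hcge : 0 ≤ c := ge_of_tendsto hlim2 (Eventually.of_forall fun y => sq_nonneg _)
    rcases eq_or_lt_of_le hcge with h | hcpos
    · rwa [← h] at hlim2
    exfalso
    have hev : ∀ᶠ y in atTop, c/2 ≤ u y ^ 2 := by
      have : Set.Ici (c/2) ∈ 𝓝 c := Ici_mem_nhds (by linarith)
      exact hlim2.eventually this
    obtain ⟨R, hR⟩ := (hev.and (eventually_ge_atTop (1:ℝ))).exists_forall_of_atTop
    have hsub : Set.Ioi (max R 1) ⊆ Set.Ioi (0:ℝ) :=
      Set.Ioi_subset_Ioi (le_trans one_pos.le (le_max_right R 1))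
    have hint : IntegrableOn (fun _ => c/2) (Set.Ioi (max R 1)) := by
      apply Integrable.mono' (hu2.mono_set hsub) aestronglyMeasurable_const
      rw [ae_restrict_iff' measurableSet_Ioi]
      filter_upwards with y hy
      have := (hR y (le_trans (le_max_left R 1) hy.le)).1
      rw [Real.norm_eq_abs, abs_of_pos (by linarith)]
      linarith
    rcases integrable_const_iff.mp hint with h | h
    · linarith
    · have h' := h.measure_univ_lt_top
      rw [Measure.restrict_apply_univ, Real.volume_Ioi] at h'
      exact (lt_irrefl _ h').elim
  -- sup of u^2 on Ioi 0
  set S := sSup ((fun x => u x ^ 2) '' Set.Ioi 0) with hSdef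
  have hSne : ((fun x => u x ^ 2) '' Set.Ioi 0).Nonempty :=
    ⟨u 1 ^ 2, Set.mem_image_of_mem _ (Set.mem_Ioi.mpr one_pos)⟩
  have hbdd : BddAbove ((fun x => u x ^ 2) '' Set.Ioi 0) := by
    have hev : ∀ᶠ y in atTop, u y ^ 2 < 1 := hulim.eventually (gt_mem_nhds one_pos)
    obtain ⟨R, hR⟩ := hev.exists_forall_of_atTop
    obtain ⟨C, hC⟩ := (isCompact_Icc (a := (0:ℝ)) (b := max R 1)).exists_bound_of_continuousOn
      ((hc.mono (fun x hx => hx.1)).pow 2)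
    refine ⟨max C 1, ?_⟩
    rintro _ ⟨x, hx, rfl⟩
    by_cases hxR : x ≤ max R 1
    · have := hC x ⟨le_of_lt hx, hxR⟩
      rw [Real.norm_eq_abs] at this
      exact le_trans (le_trans (le_abs_self _) this) (le_max_left C 1)
    · push_neg at hxR
      have := hR x (le_trans (le_max_left R 1) hxR.le)
      exact le_trans this.le (le_max_right C 1)
  have hS_ub : ∀ x ∈ Set.Ioi (0:ℝ), u x ^ 2 ≤ S := fun x hx =>
    le_csSup hbdd (Set.mem_image_of_mem _ hx)
  have hS0 : 0 ≤ S := le_trans (sq_nonneg (u 1)) (hS_ub 1 (Set.mem_Ioi.mpr one_pos))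
  clear_value S
  by_cases hS : S = 0
  · -- u ≡ 0 on Ioi 0
    have hI : I = 0 := by
      rw [hIdef]
      rw [MeasureTheory.setIntegral_congr_fun measurableSet_Ioi (g := fun _ => (0:ℝ))]
      · simp
      · intro x hx
        have h1 := hS_ub x hx
        rw [hS] at h1
        have : u x = 0 := by nlinarith [sq_nonneg (u x)]
        simp [this]
    rw [hI]; exact hRHS0
  have hSpos : 0 < S := lt_of_le_of_ne hS0 (Ne.symm hS)
  -- MAIN ESTIMATE
  have main : ∀ β : ℝ, S < β → ∀ lam : ℝ, 0 < lam →
      β^2/2 * Real.arcsin (S/β) ≤ lam * E + (1/lam) * (β^2 * M - I) := by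
    intro β hβS lam hlam
    have hβ0 : 0 < β := lt_of_le_of_lt hS0 hβS
    set H : ℝ → ℝ := fun s => s * Real.sqrt (β^2 - s^2) / 4 + (β^2/4) * Real.arcsin (s/β) with hHdef
    set f : ℝ → ℝ := fun x => u x * deriv u x * Real.sqrt (β^2 - (u x ^ 2)^2) with hfdef
    have hHcont : Continuous H := by
      apply Continuous.add
      · exact (continuous_id.mul ((continuous_const.sub (continuous_pow 2)).sqrt)).div_const 4
      · exact continuous_const.mul (Real.continuous_arcsin.comp (continuous_id.div_const β))
    have hptle : ∀ x ∈ Set.Ioi (0:ℝ), |u x ^ 2| < β := fun x hx => by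
      rw [abs_of_nonneg (sq_nonneg _)]
      exact lt_of_le_of_lt (hS_ub x hx) hβS
    -- derivative of H ∘ u²
    have hψderiv : ∀ x ∈ Set.Ioi (0:ℝ), HasDerivAt (fun y => H (u y ^ 2)) (f x) x := by
      intro x hx
      have h1 := (hasDerivAt_H β (u x ^ 2) hβ0 (hptle x hx)).comp x (hsq_deriv x hx)
      refine h1.congr_deriv ?_
      simp only [hfdef]
      ring
    -- integrability of f
    have hsqrtmeas : AEStronglyMeasurable (fun x => Real.sqrt (β^2 - (u x ^ 2)^2))
        (volume.restrict (Set.Ioi 0)) := by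
      apply Continuous.comp_aestronglyMeasurable (g := Real.sqrt)
        Real.continuous_sqrt
      exact (aestronglyMeasurable_const.sub (((humeas.pow 2)).pow 2))
    have hsqrtle : ∀ x : ℝ, Real.sqrt (β^2 - (u x ^ 2)^2) ≤ β := fun x => by
      calc Real.sqrt (β^2 - (u x ^ 2)^2) ≤ Real.sqrt (β^2) :=
            Real.sqrt_le_sqrt (by nlinarith [sq_nonneg (u x ^ 2)])
        _ = β := Real.sqrt_sq hβ0.le
    have hfint : IntegrableOn f (Set.Ioi 0) := by
      apply Integrable.mono' ((huu'.abs).const_mul β) ((humeas.mul hu'meas).mul hsqrtmeas)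
      filter_upwards with x
      rw [Real.norm_eq_abs]
      show |u x * deriv u x * Real.sqrt (β^2 - (u x ^2)^2)| ≤ β * |u x * deriv u x|
      have h1 : |u x * deriv u x * Real.sqrt (β^2 - (u x ^2)^2)|
          = |u x * deriv u x| * Real.sqrt (β^2 - (u x ^2)^2) := by
        rw [abs_mul, abs_of_nonneg (Real.sqrt_nonneg _)]
      rw [h1]
      calc |u x * deriv u x| * Real.sqrt (β^2 - (u x ^2)^2)
          ≤ |u x * deriv u x| * β := by
            exact mul_le_mul_of_nonneg_left (hsqrtle x) (abs_nonneg _)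
        _ = β * |u x * deriv u x| := by ring
    set J := ∫ x in Set.Ioi (0:ℝ), |f x| with hJdef
    -- FTC bound: H (u x ^ 2) ≤ J for x > 0
    have hHbound : ∀ x ∈ Set.Ioi (0:ℝ), H (u x ^ 2) ≤ J := by
      intro x hx
      have hx0 : (0:ℝ) < x := hx
      have hftc : ∀ y : ℝ, x ≤ y → H (u y ^ 2) - H (u x ^ 2) = ∫ t in x..y, f t := by
        intro y hy
        have hsub : Set.uIcc x y ⊆ Set.Ioi 0 := by
          rw [Set.uIcc_of_le hy]
          intro t ht; exact lt_of_lt_of_le hx0 ht.1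
        rw [intervalIntegral.integral_eq_sub_of_hasDerivAt
          (fun t ht => hψderiv t (hsub ht))
          ((hfint.mono_set hsub).intervalIntegrable)]
      have hfx : IntegrableOn f (Set.Ioi x) := hfint.mono_set (Set.Ioi_subset_Ioi hx0.le)
      have h1 : Tendsto (fun y => ∫ t in x..y, f t) atTop (𝓝 (∫ t in Set.Ioi x, f t)) :=
        MeasureTheory.intervalIntegral_tendsto_integral_Ioi x hfx tendsto_id
      have h2 : Tendsto (fun y => H (u y ^ 2) - H (u x ^ 2)) atTop (𝓝 (H 0 - H (u x ^ 2))) :=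
        (((hHcont.tendsto 0).comp hulim).sub_const _)
      have hH0 : H 0 = 0 := by simp [hHdef]
      have heq : ∫ t in Set.Ioi x, f t = - H (u x ^ 2) := by
        have h3 : Tendsto (fun y => ∫ t in x..y, f t) atTop (𝓝 (H 0 - H (u x ^ 2))) := by
          apply h2.congr'
          filter_upwards [eventually_ge_atTop x] with y hy
          exact hftc y hy
        have := tendsto_nhds_unique h1 h3
        rw [this, hH0]; ring
      have h4 : H (u x ^ 2) ≤ |∫ t in Set.Ioi x, f t| := by
        rw [heq, abs_neg]
        exact le_abs_self _
      calc H (u x ^ 2) ≤ |∫ t in Set.Ioi x, f t| := h4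
        _ ≤ ∫ t in Set.Ioi x, |f t| := by
            simpa [Real.norm_eq_abs] using
              MeasureTheory.norm_integral_le_integral_norm (μ := volume.restrict (Set.Ioi x)) f
        _ ≤ J := by
            apply MeasureTheory.setIntegral_mono_set hfint.abs
            · filter_upwards with t using abs_nonneg _
            · exact HasSubset.Subset.eventuallyLE (Set.Ioi_subset_Ioi hx0.le)
    -- AM-GM integral bound: 2*J ≤ lam*E + (1/lam)*(β²M − I)
    have hJle : 2 * J ≤ lam * E + (1/lam) * (β^2 * M - I) := by
      have hgint : IntegrableOn
          (fun x => lam * (deriv u x)^2 + (1/lam) * (β^2 * u x ^ 2 - u x ^ 6)) (Set.Ioi 0) :=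
        (hu'2.const_mul lam).add (((hu2.const_mul (β^2)).sub h6).const_mul (1/lam))
      have hptwise : ∀ x ∈ Set.Ioi (0:ℝ),
          2 * |f x| ≤ lam * (deriv u x)^2 + (1/lam) * (β^2 * u x ^ 2 - u x ^ 6) := by
        intro x hx
        have ha2 : u x ^ 2 ≤ S := hS_ub x hx
        have hr0 : (0:ℝ) ≤ Real.sqrt (β^2 - (u x ^ 2)^2) := Real.sqrt_nonneg _
        have hrsq : Real.sqrt (β^2 - (u x ^ 2)^2) ^ 2 = β^2 - (u x ^ 2)^2 :=
          Real.sq_sqrt (by nlinarith [sq_nonneg (u x)])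
        have hfx : |f x| = |u x| * |deriv u x| * Real.sqrt (β^2 - (u x ^ 2)^2) := by
          simp only [hfdef]
          rw [abs_mul, abs_mul, abs_of_nonneg hr0]
        rw [hfx]
        have hsq_a : |u x| ^ 2 = u x ^ 2 := sq_abs _
        have hsq_b : |deriv u x| ^ 2 = deriv u x ^ 2 := sq_abs _
        have ha0 : 0 ≤ |u x| := abs_nonneg _
        have hb0 : 0 ≤ |deriv u x| := abs_nonneg _
        have h1 : 2 * (|u x| * |deriv u x| * Real.sqrt (β^2 - (u x ^ 2)^2)) * lam
            ≤ lam^2 * |deriv u x|^2 + |u x|^2 * Real.sqrt (β^2 - (u x ^ 2)^2)^2 := by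
          nlinarith [sq_nonneg (lam * |deriv u x| - |u x| * Real.sqrt (β^2 - (u x ^ 2)^2)),
            mul_nonneg ha0 hr0, hlam.le]
        have h2 : |u x|^2 * Real.sqrt (β^2 - (u x ^ 2)^2)^2 = β^2 * u x ^ 2 - u x ^ 6 := by
          rw [hsq_a, hrsq]; ring
        calc 2 * (|u x| * |deriv u x| * Real.sqrt (β^2 - (u x ^ 2)^2))
            = 2 * (|u x| * |deriv u x| * Real.sqrt (β^2 - (u x ^ 2)^2)) * lam / lam := by
              field_simp
          _ ≤ (lam^2 * |deriv u x|^2 + |u x|^2 * Real.sqrt (β^2 - (u x ^ 2)^2)^2) / lam :=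
              (div_le_div_iff_of_pos_right hlam).mpr h1
          _ = lam * (deriv u x)^2 + (1/lam) * (β^2 * u x ^ 2 - u x ^ 6) := by
              rw [h2, hsq_b]
              field_simp
      have hmono := MeasureTheory.setIntegral_mono_on ((hfint.abs).const_mul 2) hgint
        measurableSet_Ioi hptwise
      have hL : ∫ x in Set.Ioi (0:ℝ), 2 * |f x| = 2 * J := by
        rw [hJdef, ← MeasureTheory.integral_const_mul _ _]
      have hR : ∫ x in Set.Ioi (0:ℝ),
          (lam * (deriv u x)^2 + (1/lam) * (β^2 * u x ^ 2 - u x ^ 6))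
          = lam * E + (1/lam) * (β^2 * M - I) := by
        have i1 : Integrable (fun x => lam * (deriv u x)^2) (volume.restrict (Set.Ioi 0)) :=
          hu'2.const_mul lam
        have i2 : Integrable (fun x => (1/lam) * (β^2 * u x ^ 2 - u x ^ 6))
            (volume.restrict (Set.Ioi 0)) :=
          ((hu2.const_mul (β^2)).sub h6).const_mul (1/lam)
        have i3 : Integrable (fun x => β^2 * u x ^ 2) (volume.restrict (Set.Ioi 0)) :=
          hu2.const_mul (β^2)
        rw [integral_add i1 i2, MeasureTheory.integral_const_mul _ _,
          MeasureTheory.integral_const_mul _ _, integral_sub i3 h6,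
          MeasureTheory.integral_const_mul _ _, ← hMdef, ← hEdef, ← hIdef]
      rw [hL, hR] at hmono
      exact hmono
    -- sup argument: 2 * H S ≤ lam*E + ...
    have hHS : 2 * H S ≤ lam * E + (1/lam) * (β^2 * M - I) := by
      by_contra hcon
      push_neg at hcon
      have hcontS : ContinuousAt (fun s => 2 * H s) S :=
        (continuous_const.mul hHcont).continuousAt
      have hnhds : (fun s => 2 * H s) ⁻¹' (Set.Ioi (lam * E + (1/lam) * (β^2 * M - I))) ∈ 𝓝 S :=
        hcontS (Ioi_mem_nhds hcon)
      obtain ⟨δ, hδpos, hδ⟩ := Metric.mem_nhds_iff.mp hnhds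
      obtain ⟨_, ⟨x, hx, rfl⟩, hlt⟩ := exists_lt_of_lt_csSup hSne
        (show S - δ/2 < sSup ((fun x => u x ^ 2) '' Set.Ioi 0) by rw [← hSdef]; linarith)
      have hmem : u x ^ 2 ∈ Metric.ball S δ := by
        rw [Metric.mem_ball, Real.dist_eq, abs_of_nonpos (by linarith [hS_ub x hx])]
        linarith [hS_ub x hx]
      have := hδ hmem
      have h2 := hHbound x hx
      simp only [Set.mem_preimage, Set.mem_Ioi] at this
      clear_value H f J
      linarith [this, h2, hJle]
    -- conclude
    have hHSge : β^2/4 * Real.arcsin (S/β) ≤ H S := by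
      rw [hHdef]
      have h1 : 0 ≤ S * Real.sqrt (β^2 - S^2) / 4 := by positivity
      linarith [h1]
    linarith [hHS, hHSge]
  -- limit β → S⁺
  have main2 : ∀ lam : ℝ, 0 < lam →
      Real.pi * S^2 / 4 ≤ lam * E + (1/lam) * (S^2 * M - I) := by
    intro lam hlam
    have h1 : ContinuousAt (fun β : ℝ => β^2/2 * Real.arcsin (S/β)) S := by
      apply ContinuousAt.mul
      · exact ((continuous_pow 2).continuousAt).div_const 2
      · exact Real.continuous_arcsin.continuousAt.comp
          (continuousAt_const.div continuousAt_id hSpos.ne')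
    have h2 : S^2/2 * Real.arcsin (S/S) = Real.pi * S^2 / 4 := by
      rw [div_self hSpos.ne', Real.arcsin_one]; ring
    have hL : Tendsto (fun β : ℝ => β^2/2 * Real.arcsin (S/β)) (𝓝[>] S)
        (𝓝 (Real.pi * S^2 / 4)) := by
      rw [← h2]
      exact (h1.tendsto).mono_left nhdsWithin_le_nhds
    have hR : Tendsto (fun β : ℝ => lam * E + (1/lam) * (β^2 * M - I)) (𝓝[>] S)
        (𝓝 (lam * E + (1/lam) * (S^2 * M - I))) := by
      apply Tendsto.mono_left _ nhdsWithin_le_nhds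
      exact (continuousAt_const.add (continuousAt_const.mul
        ((((continuous_pow 2).continuousAt).mul continuousAt_const).sub continuousAt_const)))
    exact le_of_tendsto_of_tendsto hL hR
      (eventually_mem_nhdsWithin.mono fun β hβ => main β hβ lam hlam)
  -- endgame
  have hpi := Real.pi_pos
  have hEpos : 0 < E := by
    rcases hE0.lt_or_eq with h | h
    · exact h
    exfalso
    have h1 := main2 1 one_pos
    rw [← h] at h1
    have hSM : 0 < S^2 * M - I := by nlinarith [mul_pos hpi (pow_pos hSpos 2)]
    have hlam0 : 0 < 8 * (S^2*M - I) / (Real.pi * S^2) := by positivity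
    have h2 := main2 _ hlam0
    rw [← h] at h2
    have e1 : 1/(8 * (S^2*M - I) / (Real.pi * S^2)) * (S^2 * M - I) = Real.pi * S^2 / 8 := by
      field_simp
    rw [e1] at h2
    nlinarith [mul_pos hpi (pow_pos hSpos 2)]
  have hlam : 0 < Real.pi * S^2 / (8 * E) := by positivity
  have hfin := main2 _ hlam
  have e1 : Real.pi * S^2 / (8 * E) * E = Real.pi * S^2 / 8 := by field_simp
  have e2 : 1/(Real.pi * S^2 / (8 * E)) * (S^2 * M - I) = 8 * E * (S^2*M - I)/(Real.pi * S^2) := by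
    rw [one_div_div]
    ring
  rw [e1, e2] at hfin
  -- derive key: π²S⁴/64 ≤ E*(S²M − I)
  have hkey : Real.pi^2 * S^4 / 64 ≤ E * (S^2 * M - I) := by
    have h3 : Real.pi * S^2 / 8 ≤ 8 * E * (S^2*M - I)/(Real.pi * S^2) := by linarith
    rw [le_div_iff₀ (by positivity)] at h3
    nlinarith [h3]
  have hkey' : E * I ≤ E * (S^2 * M) - Real.pi^2 * S^4/64 := by nlinarith [hkey]
  have P1 : Real.pi^2 * (E * I) ≤ Real.pi^2 * (E * (S^2*M) - Real.pi^2 * S^4/64) :=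
    mul_le_mul_of_nonneg_left hkey' (by positivity)
  have P2 : 0 ≤ 1024 * M^2 * E^2 - 64 * Real.pi^2 * M * E * S^2 + Real.pi^4 * S^4 := by
    nlinarith [sq_nonneg (32 * M * E - Real.pi^2 * S^2)]
  have goal' : I * Real.pi^2 * E ≤ 16 * M^2 * E * E := by nlinarith [P1, P2]
  have hgoal : I * Real.pi^2 ≤ 16 * M^2 * E := by
    rw [← mul_le_mul_iff_of_pos_right hEpos]
    linarith [goal']
  rw [show (16:ℝ)/Real.pi^2 * M^2 * E = 16 * M^2 * E / Real.pi^2 by ring,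
    le_div_iff₀ (by positivity)]
  linarith [hgoal]
end

section
/- Asymptotics of the turning point: for s ∈ (0,1), let t(s) be the unique real number t > 0 satisfying t⁶ − t² = 3·s²·(1 − s⁴) (so that t(s) > 1). Then (t(s)⁴ − 1)/s² → 3 as s → 0⁺, i.e. t(s)⁴ − 1 is asymptotic to 3·s² as s → 0⁺. -/
open Real Set Filter

theorem stmt_19 (t : ℝ → ℝ)
    (ht : ∀ s ∈ Set.Ioo (0:ℝ) 1,
      0 < t s ∧ (t s) ^ 6 - (t s) ^ 2 = 3 * s ^ 2 * (1 - s ^ 4)) :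
    (∀ s ∈ Set.Ioo (0:ℝ) 1, 1 < t s) ∧
    Filter.Tendsto (fun s => ((t s) ^ 4 - 1) / s ^ 2)
      (nhdsWithin 0 (Set.Ioi 0)) (nhds 3) := by
  have h1 : ∀ s ∈ Set.Ioo (0:ℝ) 1, 1 < t s := by
    intro s hs
    obtain ⟨htpos, heq⟩ := ht s hs
    by_contra h
    push_neg at h
    have hs1 := hs.1
    have hs2 := hs.2
    have h4 : t s ^ 4 ≤ 1 := pow_le_one₀ htpos.le h
    have hs4 : s ^ 4 < 1 := pow_lt_one₀ hs1.le hs2 (by norm_num)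
    nlinarith [pow_pos hs.1 2, sq_nonneg (t s),
      mul_nonneg (sq_nonneg (t s)) (sub_nonneg.mpr h4)]
  refine ⟨h1, ?_⟩
  have hmem : Set.Ioo (0:ℝ) 1 ∈ nhdsWithin (0:ℝ) (Set.Ioi 0) := by
    rw [mem_nhdsWithin]
    exact ⟨Set.Iio 1, isOpen_Iio, by norm_num,
      by rintro x ⟨hx1, hx2⟩; exact ⟨hx2, hx1⟩⟩
  have key : ∀ s ∈ Set.Ioo (0:ℝ) 1, ((t s)^4 - 1)/s^2 = 3*(1-s^4)/(t s)^2 := by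
    intro s hs
    obtain ⟨htpos, heq⟩ := ht s hs
    have hs0 : s ≠ 0 := ne_of_gt hs.1
    have ht0 : t s ≠ 0 := ne_of_gt htpos
    field_simp
    nlinarith [heq]
  have htend : Tendsto (fun s => (t s)^2) (nhdsWithin 0 (Set.Ioi 0)) (nhds 1) := by
    have hc : Continuous fun s : ℝ => 1 + 3*s^2 := by continuity
    have hup : Tendsto (fun s : ℝ => 1 + 3*s^2) (nhdsWithin 0 (Set.Ioi 0)) (nhds 1) := by
      have := (hc.tendsto 0).mono_left (nhdsWithin_le_nhds (s := Set.Ioi (0:ℝ)))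
      simpa using this
    apply tendsto_of_tendsto_of_tendsto_of_le_of_le' tendsto_const_nhds hup
    · filter_upwards [hmem] with s hs
      have h := h1 s hs
      nlinarith
    · filter_upwards [hmem] with s hs
      obtain ⟨htpos, heq⟩ := ht s hs
      have h := h1 s hs
      have hs1 := hs.1
      have hs2 := hs.2
      nlinarith [pow_pos hs.1 4, sq_nonneg (t s ^ 2 - 1)]
  have hnum : Tendsto (fun s : ℝ => 3*(1-s^4)) (nhdsWithin 0 (Set.Ioi 0)) (nhds 3) := by
    have hc : Continuous fun s : ℝ => 3*(1-s^4) := by continuity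
    have := (hc.tendsto 0).mono_left (nhdsWithin_le_nhds (s := Set.Ioi (0:ℝ)))
    simpa using this
  have hdiv : Tendsto (fun s => 3*(1-s^4)/(t s)^2) (nhdsWithin 0 (Set.Ioi 0)) (nhds 3) := by
    simpa [Pi.div_def] using hnum.div htend (by norm_num)
  apply Tendsto.congr' _ hdiv
  filter_upwards [hmem] with s hs
  exact (key s hs).symm
end
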